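/- arXiv:0710.0261 — 6 statements merged into one kernel-verified Lean document; each statement's English description precedes it below -/
import Mathlib

section
/- The trace of the representation matrix ρ_{(k,l)}(σ_p) (for any p) equals q·C(k+l-1, l) - q^{-1}·C(k+l-1, l-1); consequently the trace of the Hamiltonian Σ_{p=1}^{k+l} ρ_{(k,l)}(σ_p) equals (k+l)(q·C(k+l-1,l) - q^{-1}·C(k+l-1,l-1)) = (qk - q^{-1}l)·C(k+l, l). -/
open Finset Matrix

/-- The `q`-number `(m)_q = (q^m - q^{-m})/(q - q^{-1})`. -/
noncomputable def qnum (q : ℂ) (m : ℕ) : ℂ := (q ^ m - q⁻¹ ^ m) / (q - q⁻¹)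

/-- The index set of the corner representation `ρ_{(k,l)}`:
`l`-element subsets `I` of `{2, ..., k+l+1}`. -/
abbrev idxKL (k l : ℕ) := ↥((Finset.Icc 2 (k+l+1)).powersetCard l)

/-- `I` with `p` and `p+1` interchanged. -/
def spSet (p : ℕ) (I : Finset ℕ) : Finset ℕ := I.image (Equiv.swap p (p+1))

/-- The corner representation `ρ_{(k,l)}(σ_p)` of `H_{k+l+1}` on the space with basis
`{v_I}`: `ρ(σ_p) v_I = q v_I` if `p, p+1 ∉ I`; `ρ(σ_p) v_I = -q⁻¹ v_I` if `p, p+1 ∈ I`;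
`ρ(σ_p) v_I = (q^p/(p)_q) v_I + ((p+1)_q/(p)_q) v_{s_p I}` if `p ∈ I, p+1 ∉ I`;
`ρ(σ_p) v_I = -(q^{-p}/(p)_q) v_I + ((p-1)_q/(p)_q) v_{s_p I}` if `p ∉ I, p+1 ∈ I`.
The `(J, I)` matrix entry is the coefficient of `v_J` in `ρ(σ_p) v_I`. -/
noncomputable def rhoKL (k l : ℕ) (q : ℂ) (p : ℕ) :
    Matrix (idxKL k l) (idxKL k l) ℂ :=
  Matrix.of fun J I =>
    if p ∉ (I : Finset ℕ) ∧ p + 1 ∉ (I : Finset ℕ) then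
      (if (J : Finset ℕ) = (I : Finset ℕ) then q else 0)
    else if p ∈ (I : Finset ℕ) ∧ p + 1 ∈ (I : Finset ℕ) then
      (if (J : Finset ℕ) = (I : Finset ℕ) then -q⁻¹ else 0)
    else if p ∈ (I : Finset ℕ) then
      (if (J : Finset ℕ) = (I : Finset ℕ) then q ^ p / qnum q p
       else if (J : Finset ℕ) = spSet p I then qnum q (p+1) / qnum q p else 0)
    else
      (if (J : Finset ℕ) = (I : Finset ℕ) then -(q⁻¹ ^ p) / qnum q p
       else if (J : Finset ℕ) = spSet p I then qnum q (p-1) / qnum q p else 0)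

/-- Counting lemma: the number of `m`-element subsets of `s` containing a fixed
element `a ∈ s` is `(s.card - 1).choose (m - 1)`. -/
lemma card_filter_mem_powersetCard {s : Finset ℕ} {a : ℕ} (ha : a ∈ s) {m : ℕ} (hm : 1 ≤ m) :
    ((s.powersetCard m).filter (fun I => a ∈ I)).card = (s.card - 1).choose (m - 1) := by
  have key : ((s.powersetCard m).filter (fun I => a ∈ I)).card
      = ((s.erase a).powersetCard (m - 1)).card := by
    refine Finset.card_bij' (fun I _ => I.erase a) (fun J _ => insert a J) ?_ ?_ ?_ ?_
    · intro I hI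
      simp only [mem_filter, mem_powersetCard] at hI
      obtain ⟨⟨hsub, hcard⟩, haI⟩ := hI
      rw [mem_powersetCard]
      exact ⟨erase_subset_erase _ hsub, by rw [card_erase_of_mem haI, hcard]⟩
    · intro J hJ
      rw [mem_powersetCard] at hJ
      obtain ⟨hsub, hcard⟩ := hJ
      have haJ : a ∉ J := fun h => (Finset.mem_erase.mp (hsub h)).1 rfl
      simp only [mem_filter, mem_powersetCard]
      refine ⟨⟨Finset.insert_subset ha (hsub.trans (Finset.erase_subset _ _)), ?_⟩,
        Finset.mem_insert_self _ _⟩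
      rw [Finset.card_insert_of_notMem haJ, hcard]
      omega
    · intro I hI
      simp only [mem_filter] at hI
      exact Finset.insert_erase hI.2
    · intro J hJ
      rw [mem_powersetCard] at hJ
      have haJ : a ∉ J := fun h => (Finset.mem_erase.mp (hJ.1 h)).1 rfl
      exact Finset.erase_insert haJ
  rw [key, Finset.card_powersetCard, Finset.card_erase_of_mem ha]

/-- `tr ρ_{(k,l)}(σ_p) = q C(k+l-1, l) - q⁻¹ C(k+l-1, l-1)` for every `p`; consequently
the trace of the Hamiltonian `Σ_{p=1}^{k+l} ρ_{(k,l)}(σ_p)` equals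
`(k+l)(q C(k+l-1,l) - q⁻¹ C(k+l-1,l-1)) = (q k - q⁻¹ l) C(k+l, l)`. -/
theorem rhoKL_trace (k l : ℕ) (hk : 1 ≤ k) (hl : 1 ≤ l) (q : ℂ) (hq : q ≠ 0)
    (hgen : ∀ m : ℕ, 1 ≤ m → m ≤ k + l → qnum q m ≠ 0) :
    (∀ p, 1 ≤ p → p ≤ k + l →
      Matrix.trace (rhoKL k l q p)
        = q * (k + l - 1).choose l - q⁻¹ * (k + l - 1).choose (l - 1)) ∧
    Matrix.trace (∑ p ∈ Finset.Icc 1 (k + l), rhoKL k l q p)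
      = (k + l) * (q * (k + l - 1).choose l - q⁻¹ * (k + l - 1).choose (l - 1)) ∧
    Matrix.trace (∑ p ∈ Finset.Icc 1 (k + l), rhoKL k l q p)
      = (q * k - q⁻¹ * l) * (k + l).choose l := by
  have hn1 : 1 ≤ k + l := le_trans hk (Nat.le_add_right k l)
  have hd1' : qnum q 1 ≠ 0 := hgen 1 le_rfl hn1
  have hd1 : q - q⁻¹ ≠ 0 := by
    intro h
    apply hd1'
    simp [qnum, h]
  -- cardinality facts
  have hScard : ((Finset.Icc 2 (k+l+1)).powersetCard l).card = (k + l).choose l := by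
    rw [Finset.card_powersetCard, Nat.card_Icc, show k + l + 1 + 1 - 2 = k + l from by omega]
  have hIcccard : (Finset.Icc 2 (k+l+1)).card = k + l := by
    rw [Nat.card_Icc]; omega
  -- Pascal over ℂ
  have hPascal : ((k + l).choose l : ℂ)
      = ((k + l - 1).choose (l - 1) : ℂ) + ((k + l - 1).choose l : ℂ) := by
    have : (k + l).choose l = (k + l - 1).choose (l - 1) + (k + l - 1).choose l := by
      have h1 : k + l = (k + l - 1) + 1 := by omega
      have h2 : l = (l - 1) + 1 := by omega
      rw [h1, h2, Nat.choose_succ_succ]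
      congr 2 <;> omega
    exact_mod_cast congrArg (Nat.cast : ℕ → ℂ) this
  -- the per-p trace
  have htr : ∀ p, 1 ≤ p → p ≤ k + l →
      Matrix.trace (rhoKL k l q p)
        = q * (k + l - 1).choose l - q⁻¹ * (k + l - 1).choose (l - 1) := by
    intro p hp1 hp2
    have hd : qnum q p ≠ 0 := hgen p hp1 hp2
    have hkey : qnum q p * (q - q⁻¹) = q ^ p - q⁻¹ ^ p := by
      rw [qnum, div_mul_cancel₀ _ hd1]
    have h : q ^ p / qnum q p - q⁻¹ ^ p / qnum q p = q - q⁻¹ := by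
      rw [div_sub_div_same, ← hkey, mul_comm, mul_div_assoc, div_self hd, mul_one]
    -- diagonal entry
    have hdiag : ∀ I : idxKL k l, rhoKL k l q p I I
        = q + (q ^ p / qnum q p - q) * (if p ∈ (I : Finset ℕ) then 1 else 0)
            + (-(q⁻¹ ^ p) / qnum q p - q) * (if p + 1 ∈ (I : Finset ℕ) then 1 else 0) := by
      intro I
      by_cases h1 : p ∈ (I : Finset ℕ) <;> by_cases h2 : p + 1 ∈ (I : Finset ℕ) <;>
        simp [rhoKL, h1, h2] <;>
        first
          | ring1
          | linear_combination h
          | linear_combination -h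
    rw [Matrix.trace]
    simp only [Matrix.diag]
    calc ∑ I : idxKL k l, rhoKL k l q p I I
        = ∑ I ∈ (Finset.Icc 2 (k+l+1)).powersetCard l,
            (q + (q ^ p / qnum q p - q) * (if p ∈ I then 1 else 0)
              + (-(q⁻¹ ^ p) / qnum q p - q) * (if p + 1 ∈ I then 1 else 0)) := by
          rw [← Finset.sum_coe_sort ((Finset.Icc 2 (k+l+1)).powersetCard l)
            (fun I => (q + (q ^ p / qnum q p - q) * (if p ∈ I then 1 else 0)
              + (-(q⁻¹ ^ p) / qnum q p - q) * (if p + 1 ∈ I then 1 else 0)))]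
          exact Finset.sum_congr rfl fun I _ => hdiag I
      _ = q * (k + l).choose l
            + (q ^ p / qnum q p - q)
              * (((Finset.Icc 2 (k+l+1)).powersetCard l).filter (fun I => p ∈ I)).card
            + (-(q⁻¹ ^ p) / qnum q p - q)
              * (((Finset.Icc 2 (k+l+1)).powersetCard l).filter (fun I => p + 1 ∈ I)).card := by
          rw [Finset.sum_add_distrib, Finset.sum_add_distrib, Finset.sum_const,
            ← Finset.mul_sum, ← Finset.mul_sum, Finset.sum_boole, Finset.sum_boole,
            hScard, nsmul_eq_mul, mul_comm ((k+l).choose l : ℂ) q]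
      _ = q * (k + l - 1).choose l - q⁻¹ * (k + l - 1).choose (l - 1) := by
          have hcard2 : (((Finset.Icc 2 (k+l+1)).powersetCard l).filter
              (fun I => p + 1 ∈ I)).card = (k + l - 1).choose (l - 1) := by
            rw [card_filter_mem_powersetCard (by simp [Finset.mem_Icc]; omega) hl, hIcccard]
          rcases Nat.lt_or_ge p 2 with hp | hp
          · -- p = 1
            have hp0 : p = 1 := by omega
            have hcard1 : (((Finset.Icc 2 (k+l+1)).powersetCard l).filter
                (fun I => p ∈ I)).card = 0 := by
              rw [Finset.card_eq_zero, Finset.filter_eq_empty_iff]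
              intro I hI
              rw [Finset.mem_powersetCard] at hI
              intro hmem
              have := hI.1 hmem
              rw [Finset.mem_Icc] at this
              omega
            have hq1 : qnum q 1 = 1 := by
              rw [qnum, pow_one, pow_one, div_self hd1]
            rw [hcard1, hcard2, hPascal, hp0, hq1]
            push_cast
            ring
          · -- p ≥ 2
            have hcard1 : (((Finset.Icc 2 (k+l+1)).powersetCard l).filter
                (fun I => p ∈ I)).card = (k + l - 1).choose (l - 1) := by
              rw [card_filter_mem_powersetCard (by simp [Finset.mem_Icc]; omega) hl, hIcccard]
            rw [hcard1, hcard2, hPascal]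
            have hcoef : q ^ p / qnum q p - q + (-(q⁻¹ ^ p) / qnum q p - q)
                = -(q + q⁻¹) := by
              linear_combination h
            push_cast
            linear_combination ((k + l - 1).choose (l - 1) : ℂ) * hcoef
  refine ⟨htr, ?_, ?_⟩
  · rw [Matrix.trace_sum]
    rw [Finset.sum_congr rfl (fun p hp => htr p (Finset.mem_Icc.mp hp).1 (Finset.mem_Icc.mp hp).2),
      Finset.sum_const, Nat.card_Icc, nsmul_eq_mul,
      show k + l + 1 - 1 = k + l from rfl]
    push_cast
    ring
  · rw [Matrix.trace_sum]
    rw [Finset.sum_congr rfl (fun p hp => htr p (Finset.mem_Icc.mp hp).1 (Finset.mem_Icc.mp hp).2),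
      Finset.sum_const, Nat.card_Icc, nsmul_eq_mul]
    have hA : ((k + l : ℕ) : ℂ) * ((k + l - 1).choose (l - 1) : ℂ)
        = ((k + l).choose l : ℂ) * (l : ℂ) := by
      have : (k + l) * (k + l - 1).choose (l - 1) = (k + l).choose l * l := by
        have h1 := Nat.add_one_mul_choose_eq (k + l - 1) (l - 1)
        have h2 : k + l - 1 + 1 = k + l := by omega
        have h3 : l - 1 + 1 = l := by omega
        rw [h2, h3] at h1
        exact h1
      exact_mod_cast congrArg (Nat.cast : ℕ → ℂ) this
    rw [show k + l + 1 - 1 = k + l from rfl]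
    push_cast at hA hPascal ⊢
    linear_combination (-q * ((k:ℂ) + l)) * hPascal - (q + q⁻¹) * hA
end

section
/- Let C(q) = Σ_{p=2}^{k+2} (1/(p-1)_q) e_{p,p} - Σ_{p=2}^{k+1} (1/(p)_q) e_{p,p+1} and let H^∞ = Σ_{p=2}^{k+1} (e_{p,p+1} + e_{p+1,p}). Then H_{(k,1)}(q) · C(q) = C(q) · H^∞. -/
open Finset Matrix

/-- The matrix unit `e_{i,j}` on the span of `v_2, ..., v_{k+2}` (zero if a label lies
outside `{2, ..., k+2}`); `v_{a+2}` corresponds to the index `a : Fin (k+1)`. -/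
def E (k i j : ℕ) : Matrix (Fin (k+1)) (Fin (k+1)) ℂ :=
  Matrix.of fun a b => if (a : ℕ) + 2 = i ∧ (b : ℕ) + 2 = j then 1 else 0

/-- The corner representation `ρ_{(k,1)}` of the Hecke algebra `H_{k+2}`. -/
noncomputable def rho (k : ℕ) (q : ℂ) (p : ℕ) : Matrix (Fin (k+1)) (Fin (k+1)) ℂ :=
  q • 1 + (qnum q (p-1) / qnum q p) • (E k p (p+1) - E k p p)
        + (qnum q (p+1) / qnum q p) • (E k (p+1) p - E k (p+1) (p+1))

/-- The traceless Hamiltonian `H_{(k,1)}(q)`. -/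
noncomputable def HH (k : ℕ) (q : ℂ) : Matrix (Fin (k+1)) (Fin (k+1)) ℂ :=
  (∑ p ∈ Finset.Icc 2 (k+1),
      ((qnum q (p+1) / qnum q p) • E k p (p+1) + (qnum q (p-1) / qnum q p) • E k (p+1) p
        - (1 / (qnum q p * qnum q (p-1))) • E k p p))
    + (qnum q k / qnum q (k+1)) • E k (k+2) (k+2)

/-- The upper triangular matrix `C(q)`. -/
noncomputable def Cmat (k : ℕ) (q : ℂ) : Matrix (Fin (k+1)) (Fin (k+1)) ℂ :=
  (∑ p ∈ Finset.Icc 2 (k+2), (qnum q (p-1))⁻¹ • E k p p)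
    - (∑ p ∈ Finset.Icc 2 (k+1), (qnum q p)⁻¹ • E k p (p+1))

/-- The `q → ∞` limit Hamiltonian `H^∞ = Σ_{p=2}^{k+1} (e_{p,p+1} + e_{p+1,p})`,
the adjacency matrix of the path (type `A`) Dynkin diagram. -/
noncomputable def Hinf (k : ℕ) : Matrix (Fin (k+1)) (Fin (k+1)) ℂ :=
  ∑ p ∈ Finset.Icc 2 (k+1), (E k p (p+1) + E k (p+1) p)

/-! ### Auxiliary machinery for the intertwining relation -/

/-- Entrywise formula for `HH` as a function of natural-number indices. -/
noncomputable def hf (k : ℕ) (q : ℂ) (a b : ℕ) : ℂ :=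
  if b = a + 1 then qnum q (a+3) / qnum q (a+2)
  else if a = b + 1 then qnum q (b+1) / qnum q (b+2)
  else if a = b then
    (if a < k then -(1 / (qnum q (a+2) * qnum q (a+1))) else qnum q k / qnum q (k+1))
  else 0

/-- Entrywise formula for `Cmat`. -/
noncomputable def cf (q : ℂ) (a b : ℕ) : ℂ :=
  if b = a then (qnum q (a+1))⁻¹
  else if b = a + 1 then -(qnum q (a+2))⁻¹
  else 0

/-- Entrywise formula for `Hinf`. -/
noncomputable def gf (a b : ℕ) : ℂ :=
  if b = a + 1 ∨ a = b + 1 then 1 else 0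

lemma sum_single' (n i : ℕ) (f : ℕ → ℂ) (hi : i < n)
    (h0 : ∀ c, c < n → c ≠ i → f c = 0) :
    ∑ c ∈ Finset.range n, f c = f i :=
  Finset.sum_eq_single_of_mem i (Finset.mem_range.2 hi)
    (fun c hc hne => h0 c (Finset.mem_range.1 hc) hne)

lemma sum_pair' (n i j : ℕ) (f : ℕ → ℂ) (hi : i < n) (hj : j < n) (hij : i ≠ j)
    (h0 : ∀ c, c < n → c ≠ i → c ≠ j → f c = 0) :
    ∑ c ∈ Finset.range n, f c = f i + f j := by
  classical
  rw [← Finset.sum_pair hij]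
  refine (Finset.sum_subset ?_ ?_).symm
  · intro x hx
    simp only [Finset.mem_insert, Finset.mem_singleton] at hx
    rcases hx with h | h <;> simp [h, Finset.mem_range, hi, hj]
  · intro x hx hx2
    simp only [Finset.mem_insert, Finset.mem_singleton, not_or] at hx2
    exact h0 x (Finset.mem_range.1 hx) hx2.1 hx2.2

lemma HH_apply (k : ℕ) (q : ℂ) (a b : Fin (k+1)) : HH k q a b = hf k q ↑a ↑b := by
  have ha : (a:ℕ) ≤ k := Nat.lt_succ_iff.1 a.2
  have hb : (b:ℕ) ≤ k := Nat.lt_succ_iff.1 b.2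
  simp only [HH, Matrix.add_apply, Matrix.sub_apply, Matrix.smul_apply, Matrix.sum_apply, Finset.sum_apply,
    E, Matrix.of_apply, smul_eq_mul, mul_ite, mul_one, mul_zero, hf]
  by_cases h1 : (b:ℕ) = ↑a + 1
  · rw [if_pos h1,
      Finset.sum_eq_single_of_mem ((a:ℕ)+2) (by simp only [Finset.mem_Icc]; omega)
        (fun p hp hne => by
          simp only [Finset.mem_Icc] at hp
          rw [if_neg (by omega), if_neg (by omega), if_neg (by omega)]; ring),
      if_pos (by omega : (a:ℕ)+2 = (a:ℕ)+2 ∧ (b:ℕ)+2 = (a:ℕ)+2+1),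
      if_neg (by omega), if_neg (by omega), if_neg (by omega)]
    norm_num
  · rw [if_neg h1]
    by_cases h2 : (a:ℕ) = ↑b + 1
    · rw [if_pos h2,
        Finset.sum_eq_single_of_mem ((b:ℕ)+2) (by simp only [Finset.mem_Icc]; omega)
          (fun p hp hne => by
            simp only [Finset.mem_Icc] at hp
            rw [if_neg (by omega), if_neg (by omega), if_neg (by omega)]; ring),
        if_neg (by omega), if_pos (by omega : (a:ℕ)+2 = (b:ℕ)+2+1 ∧ (b:ℕ)+2 = (b:ℕ)+2),
        if_neg (by omega), if_neg (by omega)]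
      norm_num
    · rw [if_neg h2]
      by_cases h3 : (a:ℕ) = ↑b
      · rw [if_pos h3]
        by_cases h4 : (a:ℕ) < k
        · rw [if_pos h4,
            Finset.sum_eq_single_of_mem ((a:ℕ)+2) (by simp only [Finset.mem_Icc]; omega)
              (fun p hp hne => by
                simp only [Finset.mem_Icc] at hp
                rw [if_neg (by omega), if_neg (by omega), if_neg (by omega)]; ring),
            if_neg (by omega), if_neg (by omega),
            if_pos (by omega : (a:ℕ)+2 = (a:ℕ)+2 ∧ (b:ℕ)+2 = (a:ℕ)+2),
            if_neg (by omega)]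
          norm_num
        · rw [if_neg h4,
            Finset.sum_eq_zero (fun p hp => by
              simp only [Finset.mem_Icc] at hp
              rw [if_neg (by omega), if_neg (by omega), if_neg (by omega)]; ring),
            if_pos (by omega : (a:ℕ)+2 = k+2 ∧ (b:ℕ)+2 = k+2)]
          norm_num
      · rw [if_neg h3,
          Finset.sum_eq_zero (fun p hp => by
            simp only [Finset.mem_Icc] at hp
            rw [if_neg (by omega), if_neg (by omega), if_neg (by omega)]; ring),
          if_neg (by omega)]
        norm_num

lemma Cmat_apply (k : ℕ) (q : ℂ) (a b : Fin (k+1)) : Cmat k q a b = cf q ↑a ↑b := by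
  have ha : (a:ℕ) ≤ k := Nat.lt_succ_iff.1 a.2
  have hb : (b:ℕ) ≤ k := Nat.lt_succ_iff.1 b.2
  simp only [Cmat, Matrix.sub_apply, Matrix.smul_apply, Matrix.sum_apply, Finset.sum_apply,
    E, Matrix.of_apply, smul_eq_mul, mul_ite, mul_one, mul_zero, cf]
  by_cases h1 : (b:ℕ) = ↑a
  · rw [if_pos h1,
      Finset.sum_eq_single_of_mem ((a:ℕ)+2) (by simp only [Finset.mem_Icc]; omega)
        (fun p hp hne => by
          simp only [Finset.mem_Icc] at hp
          rw [if_neg (by omega)]),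
      if_pos (by omega : (a:ℕ)+2 = (a:ℕ)+2 ∧ (b:ℕ)+2 = (a:ℕ)+2),
      Finset.sum_eq_zero (fun p hp => by
        simp only [Finset.mem_Icc] at hp
        rw [if_neg (by omega)])]
    norm_num
  · rw [if_neg h1]
    by_cases h2 : (b:ℕ) = ↑a + 1
    · rw [if_pos h2,
        Finset.sum_eq_zero (fun p hp => by
          simp only [Finset.mem_Icc] at hp
          rw [if_neg (by omega)]),
        Finset.sum_eq_single_of_mem ((a:ℕ)+2) (by simp only [Finset.mem_Icc]; omega)
          (fun p hp hne => by
            simp only [Finset.mem_Icc] at hp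
            rw [if_neg (by omega)]),
        if_pos (by omega : (a:ℕ)+2 = (a:ℕ)+2 ∧ (b:ℕ)+2 = (a:ℕ)+2+1)]
      norm_num
    · rw [if_neg h2,
        Finset.sum_eq_zero (fun p hp => by
          simp only [Finset.mem_Icc] at hp
          rw [if_neg (by omega)]),
        Finset.sum_eq_zero (fun p hp => by
          simp only [Finset.mem_Icc] at hp
          rw [if_neg (by omega)])]
      norm_num

lemma Hinf_apply (k : ℕ) (a b : Fin (k+1)) : Hinf k a b = gf ↑a ↑b := by
  have ha : (a:ℕ) ≤ k := Nat.lt_succ_iff.1 a.2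
  have hb : (b:ℕ) ≤ k := Nat.lt_succ_iff.1 b.2
  simp only [Hinf, Matrix.add_apply, Matrix.sum_apply, Finset.sum_apply, E, Matrix.of_apply, gf]
  by_cases h1 : (b:ℕ) = ↑a + 1
  · rw [Finset.sum_eq_single_of_mem ((a:ℕ)+2) (by simp only [Finset.mem_Icc]; omega)
        (fun p hp hne => by
          simp only [Finset.mem_Icc] at hp
          rw [if_neg (by omega), if_neg (by omega)]; ring),
      if_pos (by omega : (a:ℕ)+2 = (a:ℕ)+2 ∧ (b:ℕ)+2 = (a:ℕ)+2+1),
      if_neg (by omega), if_pos (Or.inl h1)]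
    norm_num
  · by_cases h2 : (a:ℕ) = ↑b + 1
    · rw [Finset.sum_eq_single_of_mem ((b:ℕ)+2) (by simp only [Finset.mem_Icc]; omega)
          (fun p hp hne => by
            simp only [Finset.mem_Icc] at hp
            rw [if_neg (by omega), if_neg (by omega)]; ring),
        if_neg (by omega), if_pos (by omega : (a:ℕ)+2 = (b:ℕ)+2+1 ∧ (b:ℕ)+2 = (b:ℕ)+2),
        if_pos (Or.inr h2)]
      norm_num
    · rw [Finset.sum_eq_zero (fun p hp => by
          simp only [Finset.mem_Icc] at hp
          rw [if_neg (by omega), if_neg (by omega)]; ring),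
        if_neg (by intro h; rcases h with h | h; exact h1 h; exact h2 h)]

set_option maxHeartbeats 1600000 in
/-- The intertwining relation `H_{(k,1)}(q) C(q) = C(q) H^∞`. -/
theorem HH_intertwine (k : ℕ) (q : ℂ) (hq : q ≠ 0)
    (hgen : ∀ m : ℕ, 1 ≤ m → m ≤ k + 1 → qnum q m ≠ 0) :
    HH k q * Cmat k q = Cmat k q * Hinf k := by
  have hd : q - q⁻¹ ≠ 0 := fun h => hgen 1 le_rfl (by omega) (by simp [qnum, h])
  have n1 : qnum q 1 = 1 := by rw [qnum, pow_one, pow_one]; exact div_self hd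
  have n0 : qnum q 0 = 0 := by simp [qnum]
  have key : ∀ m : ℕ, qnum q (m+1) * qnum q (m+1) = 1 + qnum q m * qnum q (m+2) := by
    intro m
    have h2 : q ^ 2 - 1 ≠ 0 := by
      intro h; apply hd; field_simp; linear_combination h
    have hD : (q ^ 2 * q ^ (m*2) - q ^ 4 * q ^ (m*2) * 2 + q ^ 6 * q ^ (m*2)) ≠ 0 := by
      have : (q ^ 2 * q ^ (m*2) - q ^ 4 * q ^ (m*2) * 2 + q ^ 6 * q ^ (m*2))
          = q ^ (m*2) * q ^ 2 * ((q ^ 2 - 1) * (q ^ 2 - 1)) := by ring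
      rw [this]
      exact mul_ne_zero (mul_ne_zero (pow_ne_zero _ hq) (pow_ne_zero _ hq)) (mul_ne_zero h2 h2)
    have e : (q^(m+1) - q⁻¹^(m+1))^2
        = (q-q⁻¹)^2 + (q^m - q⁻¹^m)*(q^(m+2)-q⁻¹^(m+2)) := by
      have h1 : q^m * q⁻¹^m = 1 := by rw [← mul_pow, mul_inv_cancel₀ hq, one_pow]
      linear_combination (q-q⁻¹)^2 * h1
    unfold qnum
    rw [div_mul_div_comm, div_mul_div_comm, add_div' _ _ _ (mul_ne_zero hd hd),
      div_left_inj' (mul_ne_zero hd hd)]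
    linear_combination e
  ext a b
  have ha : (a:ℕ) ≤ k := Nat.lt_succ_iff.1 a.2
  have hb : (b:ℕ) ≤ k := Nat.lt_succ_iff.1 b.2
  rw [Matrix.mul_apply, Matrix.mul_apply]
  simp only [HH_apply, Cmat_apply, Hinf_apply]
  rw [Fin.sum_univ_eq_sum_range (fun c => hf k q ↑a c * cf q c ↑b),
      Fin.sum_univ_eq_sum_range (fun c => cf q ↑a c * gf c ↑b)]
  by_cases hk : k = 0
  · subst hk
    have ha0 : (a:ℕ) = 0 := by omega
    have hb0 : (b:ℕ) = 0 := by omega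
    rw [Finset.sum_range_one, Finset.sum_range_one, ha0, hb0]
    simp [hf, cf, gf, n0]
  · by_cases hb0 : (b:ℕ) = 0
    · rw [sum_single' (k+1) 0 _ (by omega)
          (fun c hc hcne => by
            have h : cf q c ↑b = 0 := by
              simp only [cf]; rw [if_neg (by omega), if_neg (by omega)]
            simp [h]),
        sum_single' (k+1) 1 _ (by omega)
          (fun c hc hcne => by
            have h : gf c ↑b = 0 := by
              simp only [gf]; rw [if_neg (by omega)]
            simp [h])]
      rw [hb0]
      by_cases ha0 : (a:ℕ) = 0
      · rw [ha0]
        simp only [hf, cf, gf]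
        split_ifs <;> (try omega) <;> (try tauto)
        rw [n1]
        field_simp
      · by_cases ha1 : (a:ℕ) = 1
        · rw [ha1]
          simp only [hf, cf, gf]
          split_ifs <;> (try omega) <;> (try tauto)
          rw [n1]
          field_simp
        · simp only [hf, cf, gf]
          split_ifs <;> (try omega) <;> (try tauto)
          ring
    · -- b ≥ 1
      obtain ⟨b', hb'⟩ : ∃ b', (b:ℕ) = b' + 1 := ⟨↑b - 1, by omega⟩
      rw [sum_pair' (k+1) ↑b (↑b-1) _ (by omega) (by omega) (by omega)
          (fun c hc h1 h2 => by
            have h : cf q c ↑b = 0 := by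
              simp only [cf]; rw [if_neg (by omega), if_neg (by omega)]
            simp [h])]
      rw [hb'] ; simp only [Nat.add_sub_cancel]
      by_cases hbk : b' + 1 = k
      · subst hbk
        rw [sum_single' (b'+1+1) b' _ (by omega)
            (fun c hc hcne => by
              have h : gf c (b'+1) = 0 := by
                simp only [gf]; rw [if_neg (by omega)]
              simp [h])]
        by_cases hA : (a:ℕ) = b' + 1
        · rw [hA]
          simp only [hf, cf, gf]
          split_ifs <;> (try omega) <;> (try tauto)
          ring
        · by_cases hB : (a:ℕ) = b'
          · rw [hB]
            have h1 : qnum q (b'+1) ≠ 0 := hgen _ (by omega) (by omega)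
            have h2 : qnum q (b'+2) ≠ 0 := hgen _ (by omega) (by omega)
            have K : qnum q (b'+2) * qnum q (b'+2) = 1 + qnum q (b'+1) * qnum q (b'+3) :=
              key (b'+1)
            simp only [hf, cf, gf]
            split_ifs <;> (try omega) <;> (try tauto)
            simp only [show b'+1+1 = b'+2 from rfl, show b'+2+1 = b'+3 from rfl,
              show b'+1+2 = b'+3 from rfl]
            field_simp
            linear_combination -K
          · by_cases hC : (a:ℕ) + 1 = b'
            · have h2 : qnum q ((a:ℕ)+2) ≠ 0 := hgen _ (by omega) (by omega)
              have h3 : qnum q ((a:ℕ)+3) ≠ 0 := hgen _ (by omega) (by omega)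
              simp only [hf, cf, gf]
              split_ifs <;> (try omega) <;> (try tauto)
              rw [show (a:ℕ)+3 = b'+2 from by omega, show (a:ℕ)+2 = b'+1 from by omega]
              have h1 : qnum q (b'+1) ≠ 0 := by
                rw [show b'+1 = (a:ℕ)+2 from by omega]; exact h2
              have h2' : qnum q (b'+2) ≠ 0 := by
                rw [show b'+2 = (a:ℕ)+3 from by omega]; exact h3
              simp only [show b'+1+1 = b'+2 from rfl, zero_mul, zero_add, mul_one]
              field_simp
            · simp only [hf, cf, gf]
              split_ifs <;> (try omega) <;> (try tauto)
              ring
      · -- 1 ≤ b, b < k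
        rw [sum_pair' (k+1) b' (b'+2) _ (by omega) (by omega) (by omega)
            (fun c hc h1 h2 => by
              have h : gf c (b'+1) = 0 := by
                simp only [gf]; rw [if_neg (by omega)]
              simp [h])]
        by_cases hA : (a:ℕ) = b' + 2
        · rw [hA]
          have h1 : qnum q (b'+2) ≠ 0 := hgen _ (by omega) (by omega)
          have h2 : qnum q (b'+3) ≠ 0 := hgen _ (by omega) (by omega)
          simp only [hf, cf, gf]
          split_ifs <;> (try omega) <;> (try tauto)
          simp only [show b'+1+1 = b'+2 from rfl, show b'+2+1 = b'+3 from rfl,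
            show b'+1+2 = b'+3 from rfl]
          field_simp
          ring
        · by_cases hB : (a:ℕ) = b' + 1
          · rw [hB]
            have h1 : qnum q (b'+2) ≠ 0 := hgen _ (by omega) (by omega)
            have h2 : qnum q (b'+3) ≠ 0 := hgen _ (by omega) (by omega)
            have K : qnum q (b'+2) * qnum q (b'+2) = 1 + qnum q (b'+1) * qnum q (b'+3) :=
              key (b'+1)
            simp only [hf, cf, gf]
            split_ifs <;> (try omega) <;> (try tauto)
            simp only [show b'+1+1 = b'+2 from rfl, show b'+2+1 = b'+3 from rfl,
              show b'+1+2 = b'+3 from rfl]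
            field_simp
            linear_combination K
          · by_cases hC : (a:ℕ) = b'
            · rw [hC]
              have h1 : qnum q (b'+1) ≠ 0 := hgen _ (by omega) (by omega)
              have h2 : qnum q (b'+2) ≠ 0 := hgen _ (by omega) (by omega)
              have K : qnum q (b'+2) * qnum q (b'+2) = 1 + qnum q (b'+1) * qnum q (b'+3) :=
                key (b'+1)
              simp only [hf, cf, gf]
              split_ifs <;> (try omega) <;> (try tauto)
              simp only [show b'+1+1 = b'+2 from rfl, show b'+2+1 = b'+3 from rfl,
                show b'+1+2 = b'+3 from rfl]
              field_simp
              linear_combination -K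
            · by_cases hD' : (a:ℕ) + 1 = b'
              · have h2 : qnum q ((a:ℕ)+2) ≠ 0 := hgen _ (by omega) (by omega)
                have h3 : qnum q ((a:ℕ)+3) ≠ 0 := hgen _ (by omega) (by omega)
                simp only [hf, cf, gf]
                split_ifs <;> (try omega) <;> (try tauto)
                rw [show (a:ℕ)+3 = b'+2 from by omega, show (a:ℕ)+2 = b'+1 from by omega]
                have h1 : qnum q (b'+1) ≠ 0 := by
                  rw [show b'+1 = (a:ℕ)+2 from by omega]; exact h2
                have h2' : qnum q (b'+2) ≠ 0 := by
                  rw [show b'+2 = (a:ℕ)+3 from by omega]; exact h3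
                simp only [show b'+1+1 = b'+2 from rfl, show b'+1+2 = b'+3 from rfl,
                  zero_mul, zero_add, mul_one]
                field_simp
                ring
              · simp only [hf, cf, gf]
                split_ifs <;> (try omega) <;> (try tauto)
                ring
end

section
/- Consequently the spectrum of H_{(k,1)}(q) = Σ_{p=1}^{k+1} ρ_{(k,1)}(σ_p) - (qk - q^{-1})·1 is {2cos(πm/(k+2)) : m = 1,...,k+1}, independent of the generic parameter q. -/
open Finset Matrix

lemma rho_apply (k : ℕ) (q : ℂ) (p : ℕ) (a b : Fin (k+1)) :
    rho k q p a b = q * (if a = b then 1 else 0)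
      + (qnum q (p-1) / qnum q p) * (if (a:ℕ)+2 = p ∧ (b:ℕ)+2 = p+1 then 1 else 0)
      - (qnum q (p-1) / qnum q p) * (if (a:ℕ)+2 = p ∧ (b:ℕ)+2 = p then 1 else 0)
      + (qnum q (p+1) / qnum q p) * (if (a:ℕ)+2 = p+1 ∧ (b:ℕ)+2 = p then 1 else 0)
      - (qnum q (p+1) / qnum q p) * (if (a:ℕ)+2 = p+1 ∧ (b:ℕ)+2 = p+1 then 1 else 0) := by
  simp only [rho, Matrix.add_apply, Matrix.sub_apply, Matrix.smul_apply, Matrix.one_apply,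
    E, Matrix.of_apply, smul_eq_mul]
  ring

lemma qnum_zero (q : ℂ) : qnum q 0 = 0 := by simp [qnum]

lemma qnum_rec {q : ℂ} (hq : q ≠ 0) (j : ℕ) :
    qnum q (j+2) = (q + q⁻¹) * qnum q (j+1) - qnum q j := by
  have key : q ^ (j+2) - q⁻¹ ^ (j+2)
      = (q + q⁻¹) * (q ^ (j+1) - q⁻¹ ^ (j+1)) - (q ^ j - q⁻¹ ^ j) := by
    linear_combination (q⁻¹ ^ j - q ^ j) * mul_inv_cancel₀ hq
  unfold qnum
  rw [key, sub_div, mul_div_assoc]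


lemma key_sum (k : ℕ) (q : ℂ) (u : Fin (k+1) → ℂ) (U : ℕ → ℂ)
    (hsum_single : ∀ i : ℕ,
      (∑ a : Fin (k+1), u a * (if (a:ℕ)+2 = i then 1 else 0)) = U i) (b : Fin (k+1)) :
    (∑ a : Fin (k+1), u a *
      (((∑ p ∈ Finset.Icc 1 (k+1), rho k q p) - (q * k - q⁻¹) • 1) a b))
    = ((k:ℂ)+1) * (q * u b)
      + (qnum q (b:ℕ) / qnum q ((b:ℕ)+1)) * U ((b:ℕ)+1)
      - (if (b:ℕ)+2 ≤ k+1 then (qnum q ((b:ℕ)+1) / qnum q ((b:ℕ)+2)) * U ((b:ℕ)+2) else 0)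
      + (if (b:ℕ)+2 ≤ k+1 then (qnum q ((b:ℕ)+3) / qnum q ((b:ℕ)+2)) * U ((b:ℕ)+3) else 0)
      - (qnum q ((b:ℕ)+2) / qnum q ((b:ℕ)+1)) * U ((b:ℕ)+2)
      - u b * (q * k - q⁻¹) := by
  have delta2 : ∀ (i : ℕ) (Q : Prop) (_ : Decidable Q),
      (∑ a : Fin (k+1), u a * (if ((a:ℕ)+2 = i ∧ Q) then 1 else 0))
        = if Q then U i else 0 := by
    intro i Q dQ
    by_cases hQ : Q
    · simp only [hQ, and_true, if_true]
      exact hsum_single i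
    · simp [hQ]
  have hterm : ∀ (C : ℂ) (i : ℕ) (Q : Prop) (_ : Decidable Q),
      (∑ a : Fin (k+1), u a * (C * (if ((a:ℕ)+2 = i ∧ Q) then 1 else 0)))
        = C * (if Q then U i else 0) := by
    intro C i Q dQ
    rw [← delta2 i Q dQ, Finset.mul_sum]
    exact Finset.sum_congr rfl (fun a _ => mul_left_comm _ _ _)
  have hdiag : ∀ (C : ℂ), (∑ a : Fin (k+1), u a * (C * (if a = b then 1 else 0)))
      = C * u b := by
    intro C
    simp only [mul_ite, mul_one, mul_zero]
    rw [Finset.sum_ite_eq' Finset.univ b (fun a => u a * C), if_pos (Finset.mem_univ b)]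
    ring
  have inner_p : ∀ p : ℕ, (∑ a : Fin (k+1), u a * rho k q p a b)
      = q * u b
        + (qnum q (p-1) / qnum q p) * (if (b:ℕ)+2 = p+1 then U p else 0)
        - (qnum q (p-1) / qnum q p) * (if (b:ℕ)+2 = p then U p else 0)
        + (qnum q (p+1) / qnum q p) * (if (b:ℕ)+2 = p then U (p+1) else 0)
        - (qnum q (p+1) / qnum q p) * (if (b:ℕ)+2 = p+1 then U (p+1) else 0) := by
    intro p
    simp only [rho_apply, mul_add, mul_sub, Finset.sum_add_distrib, Finset.sum_sub_distrib]
    rw [hdiag q, hterm _ p ((b:ℕ)+2 = p+1) _, hterm _ p ((b:ℕ)+2 = p) _,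
      hterm _ (p+1) ((b:ℕ)+2 = p) _, hterm _ (p+1) ((b:ℕ)+2 = p+1) _]
  calc (∑ a : Fin (k+1), u a *
      (((∑ p ∈ Finset.Icc 1 (k+1), rho k q p) - (q * k - q⁻¹) • 1) a b))
      = (∑ p ∈ Finset.Icc 1 (k+1), (∑ a : Fin (k+1), u a * rho k q p a b))
        - u b * (q * k - q⁻¹) := by
        have hexp : ∀ a : Fin (k+1), u a *
            (((∑ p ∈ Finset.Icc 1 (k+1), rho k q p) - (q * k - q⁻¹) • 1) a b)
            = (∑ p ∈ Finset.Icc 1 (k+1), u a * rho k q p a b)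
              - u a * ((q * k - q⁻¹) * (if a = b then 1 else 0)) := by
          intro a
          simp only [Matrix.sub_apply, Matrix.smul_apply, Matrix.sum_apply, Matrix.one_apply,
            smul_eq_mul, mul_sub, Finset.mul_sum]
        rw [Finset.sum_congr rfl (fun a _ => hexp a), Finset.sum_sub_distrib, Finset.sum_comm]
        congr 1
        simp only [mul_ite, mul_one, mul_zero]
        rw [Finset.sum_ite_eq' Finset.univ b (fun a => u a * (q * (k:ℂ) - q⁻¹)),
          if_pos (Finset.mem_univ b)]
    _ = ((k:ℂ)+1) * (q * u b)
      + (qnum q (b:ℕ) / qnum q ((b:ℕ)+1)) * U ((b:ℕ)+1)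
      - (if (b:ℕ)+2 ≤ k+1 then (qnum q ((b:ℕ)+1) / qnum q ((b:ℕ)+2)) * U ((b:ℕ)+2) else 0)
      + (if (b:ℕ)+2 ≤ k+1 then (qnum q ((b:ℕ)+3) / qnum q ((b:ℕ)+2)) * U ((b:ℕ)+3) else 0)
      - (qnum q ((b:ℕ)+2) / qnum q ((b:ℕ)+1)) * U ((b:ℕ)+2)
      - u b * (q * k - q⁻¹) := by
        simp only [inner_p]
        congr 1
        rw [Finset.sum_sub_distrib, Finset.sum_add_distrib, Finset.sum_sub_distrib,
          Finset.sum_add_distrib]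
        congr 1
        · congr 1
          · congr 1
            · congr 1
              · -- constant sum
                rw [Finset.sum_const, Nat.card_Icc]
                simp only [Nat.add_sub_cancel, nsmul_eq_mul]
                push_cast
                ring
              · -- S1
                have hcond : ∀ p : ℕ, ((b:ℕ)+2 = p+1) = (p = (b:ℕ)+1) :=
                  fun p => propext ⟨fun h => by omega, fun h => by omega⟩
                simp only [hcond, mul_ite, mul_zero]
                rw [Finset.sum_ite_eq' (Finset.Icc 1 (k+1)) ((b:ℕ)+1)
                  (fun p => qnum q (p-1) / qnum q p * U p), if_pos]
                · simp
                · rw [Finset.mem_Icc]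
                  exact ⟨by omega, by have := b.isLt; omega⟩
            · -- S2
              have hcond : ∀ p : ℕ, ((b:ℕ)+2 = p) = (p = (b:ℕ)+2) :=
                fun p => propext ⟨fun h => by omega, fun h => by omega⟩
              simp only [hcond, mul_ite, mul_zero]
              rw [Finset.sum_ite_eq' (Finset.Icc 1 (k+1)) ((b:ℕ)+2)
                (fun p => qnum q (p-1) / qnum q p * U p)]
              by_cases hc : (b:ℕ)+2 ≤ k+1
              · rw [if_pos (Finset.mem_Icc.mpr ⟨by omega, hc⟩), if_pos hc,
                  show (b:ℕ)+2-1 = (b:ℕ)+1 from by omega]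
              · rw [if_neg (fun hmem => hc (Finset.mem_Icc.mp hmem).2), if_neg hc]
          · -- S3
            have hcond : ∀ p : ℕ, ((b:ℕ)+2 = p) = (p = (b:ℕ)+2) :=
              fun p => propext ⟨fun h => by omega, fun h => by omega⟩
            simp only [hcond, mul_ite, mul_zero]
            rw [Finset.sum_ite_eq' (Finset.Icc 1 (k+1)) ((b:ℕ)+2)
              (fun p => qnum q (p+1) / qnum q p * U (p+1))]
            by_cases hc : (b:ℕ)+2 ≤ k+1
            · rw [if_pos (Finset.mem_Icc.mpr ⟨by omega, hc⟩), if_pos hc,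
                show (b:ℕ)+2+1 = (b:ℕ)+3 from by omega]
            · rw [if_neg (fun hmem => hc (Finset.mem_Icc.mp hmem).2), if_neg hc]
        · -- S4
          have hcond : ∀ p : ℕ, ((b:ℕ)+2 = p+1) = (p = (b:ℕ)+1) :=
            fun p => propext ⟨fun h => by omega, fun h => by omega⟩
          simp only [hcond, mul_ite, mul_zero]
          rw [Finset.sum_ite_eq' (Finset.Icc 1 (k+1)) ((b:ℕ)+1)
            (fun p => qnum q (p+1) / qnum q p * U (p+1)), if_pos]
          rw [Finset.mem_Icc]
          exact ⟨by omega, by have := b.isLt; omega⟩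

set_option maxHeartbeats 2000000 in
lemma eigen_eq (k : ℕ) (q : ℂ) (hq : q ≠ 0)
    (hgen : ∀ m : ℕ, 1 ≤ m → m ≤ k + 1 → qnum q m ≠ 0)
    (lam : ℂ) (s : ℕ → ℂ) (hs0 : s 0 = 0) (hstop : s (k+2) = 0)
    (hsrec : ∀ j, s (j+2) = lam * s (j+1) - s j) (b : Fin (k+1)) :
    (∑ a : Fin (k+1), (s ((a:ℕ)+1) / qnum q ((a:ℕ)+1) - s ((a:ℕ)+2) / qnum q ((a:ℕ)+2)) *
      (((∑ p ∈ Finset.Icc 1 (k+1), rho k q p) - (q * k - q⁻¹) • 1) a b))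
    = lam * (s ((b:ℕ)+1) / qnum q ((b:ℕ)+1) - s ((b:ℕ)+2) / qnum q ((b:ℕ)+2)) := by
  have hd : q - q⁻¹ ≠ 0 := by
    intro h
    have h1 := hgen 1 le_rfl (by omega)
    simp [qnum, h] at h1
  set U : ℕ → ℂ := fun i => if 2 ≤ i ∧ i ≤ k+2 then
      s (i-1) / qnum q (i-1) - s i / qnum q i else 0 with hUdef
  set u : Fin (k+1) → ℂ :=
    fun a => s ((a:ℕ)+1) / qnum q ((a:ℕ)+1) - s ((a:ℕ)+2) / qnum q ((a:ℕ)+2) with hudef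
  have hsingle : ∀ i : ℕ,
      (∑ a : Fin (k+1), u a * (if (a:ℕ)+2 = i then 1 else 0)) = U i := by
    intro i
    by_cases h : 2 ≤ i ∧ i ≤ k+2
    · obtain ⟨h1, h2⟩ := h
      rw [show U i = s (i-1) / qnum q (i-1) - s i / qnum q i from by
        rw [hUdef]; exact if_pos ⟨h1, h2⟩]
      rw [Finset.sum_eq_single (⟨i-2, by omega⟩ : Fin (k+1))]
      · rw [if_pos (by simp; omega), mul_one, hudef]
        simp only
        rw [show (i-2)+1 = i-1 from by omega, show (i-2)+2 = i from by omega]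
      · intro a _ ha
        rw [if_neg, mul_zero]
        intro hcon
        exact ha (Fin.ext (show (a:ℕ) = i - 2 by omega))
      · intro h; exact absurd (Finset.mem_univ _) h
    · rw [show U i = 0 from by rw [hUdef]; exact if_neg h]
      apply Finset.sum_eq_zero
      intro a _
      rw [if_neg, mul_zero]
      have := a.isLt
      omega
  refine (key_sum k q u U hsingle b).trans ?_
  set nb : ℕ := (b:ℕ) with hnbdef
  have hnb : nb ≤ k := by have := b.isLt; omega
  have hB : qnum q (nb+1) ≠ 0 := hgen (nb+1) (by omega) (by omega)
  have hU2 : U (nb+2) = s (nb+1) / qnum q (nb+1) - s (nb+2) / qnum q (nb+2) := by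
    rw [hUdef]
    simp only
    rw [if_pos ⟨by omega, by omega⟩, show nb+2-1 = nb+1 from by omega]
  have hub : u b = s (nb+1) / qnum q (nb+1) - s (nb+2) / qnum q (nb+2) := by
    rw [hudef]
  have hT1 : (qnum q nb / qnum q (nb+1)) * U (nb+1)
      = s nb / qnum q (nb+1) - (qnum q nb / qnum q (nb+1)) * (s (nb+1) / qnum q (nb+1)) := by
    rcases Nat.eq_zero_or_pos nb with h0 | hpos
    · rw [h0]
      rw [show U (0+1) = 0 from by rw [hUdef]; exact if_neg (by omega)]
      simp [qnum_zero, hs0]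
    · have hA : qnum q nb ≠ 0 := hgen nb hpos (by omega)
      have hU1 : U (nb+1) = s nb / qnum q nb - s (nb+1) / qnum q (nb+1) := by
        rw [hUdef]
        simp only
        rw [if_pos ⟨by omega, by omega⟩, show nb+1-1 = nb from by omega]
      rw [hU1, mul_sub]
      congr 1
      field_simp
  by_cases hc : nb+2 ≤ k+1
  · have hC : qnum q (nb+2) ≠ 0 := hgen (nb+2) (by omega) hc
    have hT3 : (qnum q (nb+3) / qnum q (nb+2)) * U (nb+3)
        = (qnum q (nb+3) / qnum q (nb+2)) * (s (nb+2) / qnum q (nb+2))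
          - s (nb+3) / qnum q (nb+2) := by
      have hU3 : U (nb+3) = s (nb+2) / qnum q (nb+2) - s (nb+3) / qnum q (nb+3) := by
        rw [hUdef]
        simp only
        rw [if_pos ⟨by omega, by omega⟩, show nb+3-1 = nb+2 from by omega]
      rw [hU3, mul_sub]
      congr 1
      rcases eq_or_ne (nb+3) (k+2) with he | hne
      · rw [he, hstop]
        simp
      · have hD : qnum q (nb+3) ≠ 0 := hgen (nb+3) (by omega) (by omega)
        field_simp
    rw [if_pos hc, if_pos hc, hU2, hT1, hT3, hub]
    have hA : qnum q nb = (q + q⁻¹) * qnum q (nb+1) - qnum q (nb+2) := by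
      linear_combination qnum_rec hq nb
    have hD : qnum q (nb+3) = (q + q⁻¹) * qnum q (nb+2) - qnum q (nb+1) :=
      qnum_rec hq (nb+1)
    have hX1 : s nb = lam * s (nb+1) - s (nb+2) := by
      linear_combination hsrec nb
    have hX4 : s (nb+3) = lam * s (nb+2) - s (nb+1) := hsrec (nb+1)
    rw [hA, hD, hX1, hX4]
    obtain ⟨F2, hs2⟩ : ∃ F2, s (nb+1) = F2 * qnum q (nb+1) :=
      ⟨s (nb+1) / qnum q (nb+1), (div_mul_cancel₀ _ hB).symm⟩
    obtain ⟨F3, hs3⟩ : ∃ F3, s (nb+2) = F3 * qnum q (nb+2) :=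
      ⟨s (nb+2) / qnum q (nb+2), (div_mul_cancel₀ _ hC).symm⟩
    rw [hs2, hs3]
    obtain ⟨qi, hqi⟩ : ∃ qi, q⁻¹ = qi := ⟨q⁻¹, rfl⟩
    rw [hqi]
    field_simp
    ring
  · have heq : nb = k := by omega
    have hX3 : s (nb+2) = 0 := by rw [show nb+2 = k+2 from by omega]; exact hstop
    rw [if_neg hc, if_neg hc, hU2, hT1, hub, hX3]
    have hA : qnum q nb = (q + q⁻¹) * qnum q (nb+1) - qnum q (nb+2) := by
      linear_combination qnum_rec hq nb
    have hX1 : s nb = lam * s (nb+1) := by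
      linear_combination hsrec nb - hX3
    rw [hA, hX1]
    obtain ⟨F2, hs2⟩ : ∃ F2, s (nb+1) = F2 * qnum q (nb+1) :=
      ⟨s (nb+1) / qnum q (nb+1), (div_mul_cancel₀ _ hB).symm⟩
    rw [hs2]
    obtain ⟨qi, hqi⟩ : ∃ qi, q⁻¹ = qi := ⟨q⁻¹, rfl⟩
    rw [hqi]
    field_simp
    ring

lemma sr_top (k m : ℕ) : Real.sin (Real.pi * m * (k+2) / (k+2)) = 0 := by
  have hk : ((k:ℝ)+2) ≠ 0 := by positivity
  have h : Real.pi * m * ((k:ℝ)+2) / ((k:ℝ)+2) = m * Real.pi := by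
    field_simp
  rw [h]
  exact Real.sin_nat_mul_pi m

lemma sr_ne (k m : ℕ) (hm1 : 1 ≤ m) (hm2 : m ≤ k+1) :
    Real.sin (Real.pi * m * (k+1) / (k+2)) ≠ 0 := by
  intro h
  rw [Real.sin_eq_zero_iff] at h
  obtain ⟨n, hn⟩ := h
  have hk : ((k:ℝ)+2) ≠ 0 := by positivity
  have hpi := Real.pi_ne_zero
  have h2 : Real.pi * ((n:ℝ) * (k+2)) = Real.pi * (m * (k+1)) := by
    have := congrArg (fun x => x * ((k:ℝ)+2)) hn
    rw [div_mul_cancel₀ _ hk] at this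
    linarith [this]
  have hint : (n : ℝ) * (k+2) = m * (k+1) := mul_left_cancel₀ hpi h2
  have hZ : n * ((k:ℤ)+2) = m * ((k:ℤ)+1) := by exact_mod_cast hint
  have hdvd : ((k:ℤ)+2) ∣ (m : ℤ) := by
    have hco : IsCoprime ((k:ℤ)+2) ((k:ℤ)+1) := ⟨1, -1, by ring⟩
    have : ((k:ℤ)+2) ∣ (m:ℤ) * ((k:ℤ)+1) := ⟨n, by linarith [hZ]⟩
    exact hco.dvd_of_dvd_mul_right this
  have : ((k:ℤ)+2) ≤ (m:ℤ) := Int.le_of_dvd (by exact_mod_cast hm1) hdvd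
  omega

lemma sr_rec (k m j : ℕ) :
    Real.sin (Real.pi * m * ((j:ℝ)+2) / (k+2))
      = 2 * Real.cos (Real.pi * m / (k+2)) * Real.sin (Real.pi * m * ((j:ℝ)+1) / (k+2))
        - Real.sin (Real.pi * m * j / (k+2)) := by
  have h1 : Real.pi*m*((j:ℝ)+2)/(k+2) = Real.pi*m*((j:ℝ)+1)/(k+2) + Real.pi*m/(k+2) := by
    ring
  have h2 : (Real.pi*m*(j:ℝ)/(k+2) : ℝ) = Real.pi*m*((j:ℝ)+1)/(k+2) - Real.pi*m/(k+2) := by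
    ring
  rw [h1, h2, Real.sin_add, Real.sin_sub]; ring

lemma mem_spectrum_iff_det' {n : ℕ} (A : Matrix (Fin n) (Fin n) ℂ) (z : ℂ) :
    z ∈ spectrum ℂ A ↔ (z • (1 : Matrix (Fin n) (Fin n) ℂ) - A).det = 0 := by
  rw [spectrum.mem_iff, Algebra.algebraMap_eq_smul_one, Matrix.isUnit_iff_isUnit_det,
    isUnit_iff_ne_zero, not_not]

lemma charpoly_eval' {n : ℕ} (A : Matrix (Fin n) (Fin n) ℂ) (z : ℂ) :
    A.charpoly.eval z = (z • (1 : Matrix (Fin n) (Fin n) ℂ) - A).det := by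
  rw [Matrix.charpoly, ← Polynomial.coe_evalRingHom, RingHom.map_det]
  congr 1
  ext i j
  by_cases h : i = j <;>
    simp [Matrix.charmatrix_apply, h, Matrix.one_apply, Matrix.smul_apply,
      Matrix.sub_apply, Matrix.diagonal]

lemma lam_mem_spectrum (k : ℕ) (q : ℂ) (hq : q ≠ 0)
    (hgen : ∀ m : ℕ, 1 ≤ m → m ≤ k + 1 → qnum q m ≠ 0)
    (m : ℕ) (hm1 : 1 ≤ m) (hm2 : m ≤ k + 1) :
    ((2 * Real.cos (Real.pi * m / (k + 2)) : ℝ) : ℂ) ∈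
      spectrum ℂ ((∑ p ∈ Finset.Icc 1 (k+1), rho k q p) - (q * k - q⁻¹) • 1) := by
  set lam : ℂ := ((2 * Real.cos (Real.pi * m / (k + 2)) : ℝ) : ℂ) with hlam
  set s : ℕ → ℂ := fun j => ((Real.sin (Real.pi * m * j / (k+2)) : ℝ) : ℂ) with hsdef
  have hs0 : s 0 = 0 := by simp [hsdef]
  have hstop : s (k+2) = 0 := by
    have h := sr_top k m
    rw [hsdef]
    simp only
    rw [show ((k+2:ℕ):ℝ) = (k:ℝ)+2 from by push_cast; ring, h, Complex.ofReal_zero]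
  have hsrec : ∀ j, s (j+2) = lam * s (j+1) - s j := by
    intro j
    rw [hsdef, hlam]
    simp only
    rw [show ((j+2:ℕ):ℝ) = (j:ℝ)+2 from by push_cast; ring,
      show ((j+1:ℕ):ℝ) = (j:ℝ)+1 from by push_cast; ring, sr_rec k m j]
    push_cast
    ring
  set u : Fin (k+1) → ℂ :=
    fun a => s ((a:ℕ)+1) / qnum q ((a:ℕ)+1) - s ((a:ℕ)+2) / qnum q ((a:ℕ)+2) with hudef
  have hkq : qnum q (k+1) ≠ 0 := hgen (k+1) (by omega) le_rfl
  have hune : u ≠ 0 := by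
    intro h0
    have h1 := congrFun h0 ⟨k, by omega⟩
    rw [hudef] at h1
    simp only [Pi.zero_apply] at h1
    have hsk1 : s (k+1) ≠ 0 := by
      rw [hsdef]
      simp only [ne_eq, Complex.ofReal_eq_zero]
      rw [show ((k+1:ℕ):ℝ) = (k:ℝ)+1 from by push_cast; ring]
      exact sr_ne k m hm1 hm2
    rw [hstop, zero_div, sub_zero] at h1
    exact hsk1 (by
      have := div_eq_zero_iff.mp h1
      rcases this with h | h
      · exact h
      · exact absurd h hkq)
  rw [mem_spectrum_iff_det', ← Matrix.exists_vecMul_eq_zero_iff]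
  refine ⟨u, hune, ?_⟩
  funext b
  have heig := eigen_eq k q hq hgen lam s hs0 hstop hsrec b
  simp only [Matrix.vecMul, dotProduct, Pi.zero_apply]
  have hsplit : ∀ a : Fin (k+1), u a *
      ((lam • (1 : Matrix (Fin (k+1)) (Fin (k+1)) ℂ)
        - ((∑ p ∈ Finset.Icc 1 (k+1), rho k q p) - (q * k - q⁻¹) • 1)) a b)
      = u a * (lam * (if a = b then 1 else 0))
        - u a * ((((∑ p ∈ Finset.Icc 1 (k+1), rho k q p) - (q * k - q⁻¹) • 1)) a b) := by
    intro a
    simp only [Matrix.sub_apply, Matrix.smul_apply, Matrix.one_apply, smul_eq_mul, mul_sub]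
  rw [Finset.sum_congr rfl (fun a _ => hsplit a), Finset.sum_sub_distrib]
  have h1 : (∑ a : Fin (k+1), u a * (lam * (if a = b then 1 else 0))) = lam * u b := by
    simp only [mul_ite, mul_one, mul_zero]
    rw [Finset.sum_ite_eq' Finset.univ b (fun a => u a * lam), if_pos (Finset.mem_univ b)]
    ring
  rw [h1, heig, sub_self]


/-- The spectrum of `H_{(k,1)}(q) = Σ_{p=1}^{k+1} ρ_{(k,1)}(σ_p) - (q k - q⁻¹)·1` is
`{2 cos(π m/(k+2)) : m = 1, ..., k+1}`, independent of the generic parameter `q`. -/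
theorem HH_spectrum (k : ℕ) (q : ℂ) (hq : q ≠ 0)
    (hgen : ∀ m : ℕ, 1 ≤ m → m ≤ k + 1 → qnum q m ≠ 0) :
    spectrum ℂ ((∑ p ∈ Finset.Icc 1 (k+1), rho k q p) - (q * k - q⁻¹) • 1) =
      {x : ℂ | ∃ m : ℕ, 1 ≤ m ∧ m ≤ k + 1 ∧
        x = ((2 * Real.cos (Real.pi * m / (k + 2)) : ℝ) : ℂ)} := by
  set A : Matrix (Fin (k+1)) (Fin (k+1)) ℂ :=
    (∑ p ∈ Finset.Icc 1 (k+1), rho k q p) - (q * k - q⁻¹) • 1 with hA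
  set lamf : ℕ → ℂ := fun m => ((2 * Real.cos (Real.pi * m / (k + 2)) : ℝ) : ℂ) with hlamf
  have hmem : ∀ m : ℕ, 1 ≤ m → m ≤ k + 1 → lamf m ∈ spectrum ℂ A :=
    fun m hm1 hm2 => lam_mem_spectrum k q hq hgen m hm1 hm2
  -- spectrum is contained in roots of charpoly
  have hsub : spectrum ℂ A ⊆ (A.charpoly.roots.toFinset : Set ℂ) := by
    intro z hz
    rw [mem_spectrum_iff_det'] at hz
    simp only [Finset.coe_sort_coe, Multiset.mem_toFinset, Finset.mem_coe]
    rw [Polynomial.mem_roots (Matrix.charpoly_monic A).ne_zero]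
    rw [Polynomial.IsRoot, charpoly_eval']
    exact hz
  -- injectivity of m ↦ lamf m on 1..k+1
  have hinj : Set.InjOn lamf (Finset.Icc 1 (k+1)) := by
    intro m1 hm1 m2 hm2 h
    simp only [Finset.coe_Icc, Set.mem_Icc] at hm1 hm2
    rw [hlamf] at h
    simp only [Complex.ofReal_inj] at h
    have hcos : Real.cos (Real.pi * m1 / (k+2)) = Real.cos (Real.pi * m2 / (k+2)) := by
      linarith [h]
    have hpos : (0:ℝ) < (k:ℝ) + 2 := by positivity
    have hb : ∀ m : ℕ, m ≤ k + 1 → Real.pi * m / (k+2) ∈ Set.Icc (0:ℝ) Real.pi := by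
      intro m hm
      constructor
      · positivity
      · rw [div_le_iff₀ hpos]
        have hmr : (m:ℝ) ≤ (k:ℝ) + 2 := by
          have : (m:ℝ) ≤ (k:ℝ) + 1 := by exact_mod_cast hm
          linarith
        nlinarith [Real.pi_pos]
    have heq := Real.injOn_cos (hb m1 hm1.2) (hb m2 hm2.2) hcos
    have hm12 : (m1:ℝ) = m2 := by
      rw [div_left_inj' hpos.ne'] at heq
      exact mul_left_cancel₀ Real.pi_ne_zero heq
    exact_mod_cast hm12
  set S : Finset ℂ := (Finset.Icc 1 (k+1)).image lamf with hS
  have hScard : S.card = k + 1 := by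
    rw [hS, Finset.card_image_of_injOn hinj, Nat.card_Icc]
    omega
  have hSsub : S ⊆ A.charpoly.roots.toFinset := by
    intro z hz
    rw [hS, Finset.mem_image] at hz
    obtain ⟨m, hm, rfl⟩ := hz
    rw [Finset.mem_Icc] at hm
    exact hsub (hmem m hm.1 hm.2)
  have hTcard : A.charpoly.roots.toFinset.card ≤ k + 1 := by
    refine le_trans (Multiset.toFinset_card_le _) (le_trans (Polynomial.card_roots' _) ?_)
    rw [Matrix.charpoly_natDegree_eq_dim]
    simp
  have hST : S = A.charpoly.roots.toFinset :=
    Finset.eq_of_subset_of_card_le hSsub (hTcard.trans hScard.ge)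
  apply Set.Subset.antisymm
  · intro z hz
    have h1 : z ∈ (A.charpoly.roots.toFinset : Set ℂ) := hsub hz
    rw [← hST] at h1
    simp only [hS, Finset.coe_image, Set.mem_image, Finset.coe_Icc, Set.mem_Icc] at h1
    obtain ⟨m, ⟨hm1, hm2⟩, hval⟩ := h1
    exact ⟨m, hm1, hm2, hval.symm⟩
  · rintro z ⟨m, hm1, hm2, rfl⟩
    exact hmem m hm1 hm2
end

section
/- Let N = Σ_{p=2}^{k+2} e_{p,p} - Σ_{p=2}^{k+1} e_{p,p+1}. Then for any two generic parameters q and r, N^{-1} C(q) C(r)^{-1} N = diag(1, (2)_r/(2)_q, (3)_r/(3)_q, ..., (k+1)_r/(k+1)_q). In particular, the matrices C(q)C(r)^{-1} for different values of the parameters commute with each other. -/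
open Finset Matrix

/-- The upper triangular matrix `N = Σ_{p=2}^{k+2} e_{p,p} - Σ_{p=2}^{k+1} e_{p,p+1}`. -/
noncomputable def Nmat (k : ℕ) : Matrix (Fin (k+1)) (Fin (k+1)) ℂ :=
  (∑ p ∈ Finset.Icc 2 (k+2), E k p p) - (∑ p ∈ Finset.Icc 2 (k+1), E k p (p+1))

lemma sum_diag_apply (k : ℕ) (c : ℕ → ℂ) (a b : Fin (k+1)) :
    (∑ p ∈ Finset.Icc 2 (k+2), c p • E k p p) a b
      = if a = b then c ((a:ℕ)+2) else 0 := by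
  have ha := a.isLt
  simp only [Matrix.sum_apply, Matrix.smul_apply, E, Matrix.of_apply, smul_eq_mul,
    mul_ite, mul_one, mul_zero]
  rw [Finset.sum_eq_single ((a:ℕ)+2)]
  · by_cases h : a = b
    · subst h; simp
    · rw [if_neg (by rintro ⟨-, h2⟩; exact h (Fin.ext (by omega))), if_neg h]
  · intro p _ hp; rw [if_neg]; rintro ⟨h1, -⟩; exact hp h1.symm
  · intro h; exact absurd (Finset.mem_Icc.mpr ⟨by omega, by omega⟩) h

lemma sum_super_apply (k : ℕ) (c : ℕ → ℂ) (a b : Fin (k+1)) :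
    (∑ p ∈ Finset.Icc 2 (k+1), c p • E k p (p+1)) a b
      = if (b:ℕ) = (a:ℕ)+1 then c ((a:ℕ)+2) else 0 := by
  have ha := a.isLt
  have hb := b.isLt
  simp only [Matrix.sum_apply, Matrix.smul_apply, E, Matrix.of_apply, smul_eq_mul,
    mul_ite, mul_one, mul_zero]
  rw [Finset.sum_eq_single ((a:ℕ)+2)]
  · by_cases h : (b:ℕ) = (a:ℕ)+1
    · rw [if_pos ⟨rfl, by omega⟩, if_pos h]
    · rw [if_neg (by rintro ⟨-, h2⟩; omega), if_neg h]
  · intro p _ hp; rw [if_neg]; rintro ⟨h1, -⟩; exact hp h1.symm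
  · intro h
    by_cases hb2 : (b:ℕ) = (a:ℕ)+1
    · exact absurd (Finset.mem_Icc.mpr ⟨by omega, by omega⟩) h
    · rw [if_neg (by rintro ⟨-, h2⟩; omega)]

lemma Nmat_apply (k : ℕ) (a b : Fin (k+1)) :
    Nmat k a b = (if a = b then 1 else 0) - (if (b:ℕ) = (a:ℕ)+1 then 1 else 0) := by
  have h1 : (∑ p ∈ Finset.Icc 2 (k+2), E k p p)
      = ∑ p ∈ Finset.Icc 2 (k+2), (1:ℂ) • E k p p := by simp
  have h2 : (∑ p ∈ Finset.Icc 2 (k+1), E k p (p+1))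
      = ∑ p ∈ Finset.Icc 2 (k+1), (1:ℂ) • E k p (p+1) := by simp
  rw [Nmat, Matrix.sub_apply, h1, h2, sum_diag_apply, sum_super_apply]

lemma Cmat_eq (k : ℕ) (q : ℂ) :
    Cmat k q = Nmat k * Matrix.diagonal (fun i : Fin (k+1) => (qnum q ((i:ℕ)+1))⁻¹) := by
  ext a b
  rw [Matrix.mul_apply]
  simp only [Matrix.diagonal_apply, mul_ite, mul_zero]
  rw [Finset.sum_ite_eq' Finset.univ b (fun x => Nmat k a x * (qnum q ((x:ℕ)+1))⁻¹)]
  simp only [Finset.mem_univ, if_true]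
  rw [Nmat_apply, Cmat, Matrix.sub_apply, sum_diag_apply k (fun p => (qnum q (p-1))⁻¹),
    sum_super_apply k (fun p => (qnum q p)⁻¹)]
  by_cases h : a = b
  · subst h
    simp [show ¬((a:ℕ) = (a:ℕ)+1) by omega, Nat.add_sub_cancel]
  · by_cases h2 : (b:ℕ) = (a:ℕ)+1
    · simp only [if_pos h2, if_neg h, zero_sub, neg_mul, one_mul]
      rw [show (b:ℕ)+1 = (a:ℕ)+2 by omega]
    · simp [h, h2]

lemma Nmat_det (k : ℕ) : (Nmat k).det = 1 := by
  have hbt : (Nmat k).BlockTriangular id := by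
    intro i j hij
    have : ¬ i = j := by intro h; subst h; exact lt_irrefl _ hij
    have h2 : ¬ (j:ℕ) = (i:ℕ)+1 := by
      have : (j:ℕ) < (i:ℕ) := hij
      omega
    rw [Nmat_apply, if_neg ‹¬ i = j›, if_neg h2, sub_zero]
  rw [Matrix.det_of_upperTriangular hbt]
  have : ∀ i : Fin (k+1), Nmat k i i = 1 := by
    intro i
    rw [Nmat_apply, if_pos rfl, if_neg (by omega), sub_zero]
  simp [this]

lemma Cmat_inv (k : ℕ) (t : ℂ)
    (hgent : ∀ m : ℕ, 1 ≤ m → m ≤ k + 1 → qnum t m ≠ 0) :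
    (Cmat k t)⁻¹
      = Matrix.diagonal (fun i : Fin (k+1) => qnum t ((i:ℕ)+1)) * (Nmat k)⁻¹ := by
  have hN : IsUnit (Nmat k).det := by rw [Nmat_det]; exact isUnit_one
  have hNl : (Nmat k)⁻¹ * Nmat k = 1 := Matrix.nonsing_inv_mul _ hN
  apply Matrix.inv_eq_left_inv
  rw [Cmat_eq k t]
  calc Matrix.diagonal (fun i : Fin (k+1) => qnum t ((i:ℕ)+1)) * (Nmat k)⁻¹
        * (Nmat k * Matrix.diagonal (fun i : Fin (k+1) => (qnum t ((i:ℕ)+1))⁻¹))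
      = Matrix.diagonal (fun i : Fin (k+1) => qnum t ((i:ℕ)+1)) * ((Nmat k)⁻¹ * Nmat k)
        * Matrix.diagonal (fun i : Fin (k+1) => (qnum t ((i:ℕ)+1))⁻¹) := by
        simp only [Matrix.mul_assoc]
    _ = Matrix.diagonal (fun i : Fin (k+1) => qnum t ((i:ℕ)+1))
        * Matrix.diagonal (fun i : Fin (k+1) => (qnum t ((i:ℕ)+1))⁻¹) := by
        rw [hNl, Matrix.mul_one]
    _ = 1 := by
        rw [Matrix.diagonal_mul_diagonal]
        have : (fun i : Fin (k+1) => qnum t ((i:ℕ)+1) * (qnum t ((i:ℕ)+1))⁻¹)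
            = fun _ => (1:ℂ) := by
          funext i
          exact mul_inv_cancel₀ (hgent ((i:ℕ)+1) (by omega) (by have := i.isLt; omega))
        rw [this, Matrix.diagonal_one]

lemma conj_eq (k : ℕ) (s t : ℂ)
    (hgent : ∀ m : ℕ, 1 ≤ m → m ≤ k + 1 → qnum t m ≠ 0) :
    Cmat k s * (Cmat k t)⁻¹
      = Nmat k * Matrix.diagonal (fun i : Fin (k+1) => qnum t ((i:ℕ)+1) / qnum s ((i:ℕ)+1))
          * (Nmat k)⁻¹ := by
  rw [Cmat_eq k s, Cmat_inv k t hgent]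
  have hd : Matrix.diagonal (fun i : Fin (k+1) => (qnum s ((i:ℕ)+1))⁻¹)
      * Matrix.diagonal (fun i : Fin (k+1) => qnum t ((i:ℕ)+1))
      = Matrix.diagonal (fun i : Fin (k+1) => qnum t ((i:ℕ)+1) / qnum s ((i:ℕ)+1)) := by
    rw [Matrix.diagonal_mul_diagonal]
    exact congrArg Matrix.diagonal (funext fun i => inv_mul_eq_div _ _)
  calc Nmat k * Matrix.diagonal (fun i : Fin (k+1) => (qnum s ((i:ℕ)+1))⁻¹)
        * (Matrix.diagonal (fun i : Fin (k+1) => qnum t ((i:ℕ)+1)) * (Nmat k)⁻¹)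
      = Nmat k * (Matrix.diagonal (fun i : Fin (k+1) => (qnum s ((i:ℕ)+1))⁻¹)
        * Matrix.diagonal (fun i : Fin (k+1) => qnum t ((i:ℕ)+1))) * (Nmat k)⁻¹ := by
        simp only [Matrix.mul_assoc]
    _ = _ := by rw [hd]


/-- `N⁻¹ C(q) C(r)⁻¹ N = diag(1, (2)_r/(2)_q, ..., (k+1)_r/(k+1)_q)`; in particular the
matrices `C(q) C(r)⁻¹` for different values of the parameters commute. -/
theorem Cmat_conjugate_diagonal (k : ℕ) (q r : ℂ) (hq : q ≠ 0) (hr : r ≠ 0)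
    (hgenq : ∀ m : ℕ, 1 ≤ m → m ≤ k + 1 → qnum q m ≠ 0)
    (hgenr : ∀ m : ℕ, 1 ≤ m → m ≤ k + 1 → qnum r m ≠ 0) :
    (Nmat k)⁻¹ * (Cmat k q * (Cmat k r)⁻¹) * Nmat k
      = Matrix.diagonal (fun i : Fin (k+1) => qnum r ((i : ℕ) + 1) / qnum q ((i : ℕ) + 1)) ∧
    (∀ s t : ℂ, s ≠ 0 → t ≠ 0 →
      (∀ m : ℕ, 1 ≤ m → m ≤ k + 1 → qnum s m ≠ 0) →
      (∀ m : ℕ, 1 ≤ m → m ≤ k + 1 → qnum t m ≠ 0) →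
      Commute (Cmat k q * (Cmat k r)⁻¹) (Cmat k s * (Cmat k t)⁻¹)) := by
  have hN : IsUnit (Nmat k).det := by rw [Nmat_det]; exact isUnit_one
  have hNl : (Nmat k)⁻¹ * Nmat k = 1 := Matrix.nonsing_inv_mul _ hN
  set D := Matrix.diagonal (fun i : Fin (k+1) => qnum r ((i:ℕ)+1) / qnum q ((i:ℕ)+1)) with hD
  constructor
  · rw [conj_eq k q r hgenr, ← hD]
    calc (Nmat k)⁻¹ * (Nmat k * D * (Nmat k)⁻¹) * Nmat k
        = ((Nmat k)⁻¹ * Nmat k) * (D * ((Nmat k)⁻¹ * Nmat k)) := by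
          simp only [Matrix.mul_assoc]
      _ = D := by rw [hNl, Matrix.one_mul, Matrix.mul_one]
  · intro s t _ _ _ hgent
    rw [conj_eq k q r hgenr, conj_eq k s t hgent, ← hD]
    set B := Matrix.diagonal (fun i : Fin (k+1) => qnum t ((i:ℕ)+1) / qnum s ((i:ℕ)+1)) with hB
    unfold Commute SemiconjBy
    have key : ∀ X Y : Matrix (Fin (k+1)) (Fin (k+1)) ℂ,
        (Nmat k * X * (Nmat k)⁻¹) * (Nmat k * Y * (Nmat k)⁻¹)
          = Nmat k * (X * Y) * (Nmat k)⁻¹ := by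
      intro X Y
      calc (Nmat k * X * (Nmat k)⁻¹) * (Nmat k * Y * (Nmat k)⁻¹)
          = Nmat k * (X * (((Nmat k)⁻¹ * Nmat k) * (Y * (Nmat k)⁻¹))) := by
            simp only [Matrix.mul_assoc]
        _ = Nmat k * (X * Y) * (Nmat k)⁻¹ := by
            rw [hNl, Matrix.one_mul]; simp only [Matrix.mul_assoc]
    rw [key, key]
    have hcomm : D * B = B * D := by
      rw [hD, hB, Matrix.diagonal_mul_diagonal, Matrix.diagonal_mul_diagonal]
      exact congrArg Matrix.diagonal (funext fun i => mul_comm _ _)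
    rw [hcomm]
end

section
/- With σ^{(m)} = 1^{⊗(m-1)} ⊗ ρ_{(k+l-1,1)}(σ_p) ⊗ 1^{⊗(l-m)} on V^{⊗l} and A_l the full antisymmetrizer on V^{⊗l}, the identity q^{1-l} A_l (σ^{(1)} σ^{(2)} ⋯ σ^{(l)}) A_l = A_l (Σ_{m=1}^{l} σ^{(m)} - (l-1) q · 1^{⊗l}) A_l holds for every p with 1 ≤ p ≤ k+l. -/
open Finset Matrix

/-- The antisymmetrizer `A_l` on `V^{⊗l}` (with `dim V = n`), written in the basis
`v_f = v_{f 0} ⊗ ⋯ ⊗ v_{f (l-1)}`: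
`A_l(v_g) = (1/l!) Σ_{s ∈ S_l} sgn(s) v_{g∘s}`. -/
noncomputable def Al (n l : ℕ) : Matrix (Fin l → Fin n) (Fin l → Fin n) ℂ :=
  Matrix.of fun f g =>
    ((l.factorial : ℂ))⁻¹ *
      ∑ s : Equiv.Perm (Fin l), ((Equiv.Perm.sign s : ℤ) : ℂ) * (if f = g ∘ s then 1 else 0)

/-- The operator `M^{(m)} = 1^{⊗(m-1)} ⊗ M ⊗ 1^{⊗(l-m)}` acting on the `m`-th factor
of `V^{⊗l}`. -/
noncomputable def Skron (n l : ℕ) (M : Matrix (Fin n) (Fin n) ℂ) (m : Fin l) :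
    Matrix (Fin l → Fin n) (Fin l → Fin n) ℂ :=
  Matrix.of fun f g => ∏ j, if j = m then M (f j) (g j) else (if f j = g j then (1 : ℂ) else 0)

/-- The `l`-fold tensor (Kronecker) power `M^{⊗l}` acting on `V^{⊗l}`. -/
noncomputable def Tpow (n l : ℕ) (M : Matrix (Fin n) (Fin n) ℂ) :
    Matrix (Fin l → Fin n) (Fin l → Fin n) ℂ :=
  Matrix.of fun f g => ∏ j, M (f j) (g j)

/-! ### Auxiliary definitions and lemmas -/

/-- The permutation matrix `P(s)`. -/
def Pm (n l : ℕ) (s : Equiv.Perm (Fin l)) : Matrix (Fin l → Fin n) (Fin l → Fin n) ℂ :=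
  Matrix.of fun f g => if f = g ∘ s then 1 else 0

noncomputable def wvec (k : ℕ) (q : ℂ) (p : ℕ) : Fin (k+1) → ℂ := fun i =>
  if (i:ℕ) + 2 = p then qnum q (p-1) / qnum q p
  else if (i:ℕ) + 2 = p+1 then -(qnum q (p+1) / qnum q p) else 0

def vvec (k p : ℕ) : Fin (k+1) → ℂ := fun j =>
  if (j:ℕ) + 2 = p then -1 else if (j:ℕ) + 2 = p+1 then 1 else 0

lemma rho_eq (k : ℕ) (q : ℂ) (p : ℕ) :
    rho k q p = q • (1 : Matrix (Fin (k+1)) (Fin (k+1)) ℂ)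
      + vecMulVec (wvec k q p) (vvec k p) := by
  ext i j
  by_cases h1 : (i:ℕ)+2 = p <;> by_cases h2 : (i:ℕ)+2 = p+1 <;>
    by_cases h3 : (j:ℕ)+2 = p <;> by_cases h4 : (j:ℕ)+2 = p+1 <;>
    simp only [rho, wvec, vvec, vecMulVec_apply, Matrix.add_apply, Matrix.smul_apply,
      Matrix.sub_apply, E, Matrix.of_apply, smul_eq_mul, h1, h2, h3, h4, if_true, if_false,
      and_true, and_false, true_and, false_and, ite_true, ite_false,
      (show ¬(p = 1 + p) by omega), (show ¬(1 + p = p) by omega)] <;>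
    first | omega | ring1 | (split_ifs <;> (first | omega | ring1))

lemma sum_delta_mul {α : Type*} [Fintype α] [DecidableEq α] (a : α) (F : α → ℂ) :
    ∑ h : α, (if h = a then (1:ℂ) else 0) * F h = F a := by
  rw [Finset.sum_eq_single a] <;> simp +contextual

lemma Pm_mul_apply {n l : ℕ} (s : Equiv.Perm (Fin l))
    (Y : Matrix (Fin l → Fin n) (Fin l → Fin n) ℂ) (f g : Fin l → Fin n) :
    (Pm n l s * Y) f g = Y (f ∘ ⇑s⁻¹) g := by
  have key : ∀ h : Fin l → Fin n, (f = h ∘ ⇑s) ↔ (h = f ∘ ⇑s⁻¹) := by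
    intro h
    constructor
    · rintro rfl; funext x; simp
    · rintro rfl; funext x; simp
  simp only [Matrix.mul_apply, Pm, Matrix.of_apply]
  simp only [key]
  exact sum_delta_mul _ _

lemma Pm_mul_Pm {n l : ℕ} (s t : Equiv.Perm (Fin l)) :
    Pm n l s * Pm n l t = Pm n l (t * s) := by
  ext f g
  rw [Pm_mul_apply]
  simp only [Pm, Matrix.of_apply]
  congr 1
  simp only [eq_iff_iff]
  constructor
  · intro h; funext x
    have := congrFun h (s x)
    simpa [Equiv.Perm.mul_apply] using this
  · intro h; funext x
    have := congrFun h (s⁻¹ x)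
    simpa [Equiv.Perm.mul_apply] using this

lemma signC_mul {l : ℕ} (s t : Equiv.Perm (Fin l)) :
    ((Equiv.Perm.sign (s * t) : ℤ) : ℂ)
      = ((Equiv.Perm.sign s : ℤ) : ℂ) * ((Equiv.Perm.sign t : ℤ) : ℂ) := by
  rw [Equiv.Perm.sign_mul, Units.val_mul, Int.cast_mul]

lemma signC_sq {l : ℕ} (t : Equiv.Perm (Fin l)) :
    ((Equiv.Perm.sign t : ℤ) : ℂ) * ((Equiv.Perm.sign t : ℤ) : ℂ) = 1 := by
  rcases Int.units_eq_one_or (Equiv.Perm.sign t) with h | h <;> rw [h] <;> norm_num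

lemma Al_eq (n l : ℕ) :
    Al n l = ((l.factorial : ℂ))⁻¹ •
      ∑ s : Equiv.Perm (Fin l), ((Equiv.Perm.sign s : ℤ) : ℂ) • Pm n l s := by
  ext f g
  simp [Al, Pm, Matrix.sum_apply, Matrix.smul_apply, smul_eq_mul]

lemma Al_mul_Pm (n l : ℕ) (t : Equiv.Perm (Fin l)) :
    Al n l * Pm n l t = ((Equiv.Perm.sign t : ℤ) : ℂ) • Al n l := by
  rw [Al_eq, Matrix.smul_mul, Finset.sum_mul]
  simp only [Matrix.smul_mul, Pm_mul_Pm]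
  rw [smul_comm (((Equiv.Perm.sign t : ℤ) : ℂ)) (((l.factorial : ℂ))⁻¹)]
  congr 1
  rw [Finset.smul_sum]
  refine Fintype.sum_equiv (Equiv.mulLeft t) _ _ fun x => ?_
  simp only [Equiv.coe_mulLeft, smul_smul]
  congr 1
  rw [signC_mul, ← mul_assoc, signC_sq, one_mul]

lemma Al_mul_Al (n l : ℕ) : Al n l * Al n l = Al n l := by
  nth_rewrite 2 [Al_eq]
  rw [Matrix.mul_smul, Matrix.mul_sum]
  simp only [Matrix.mul_smul, Al_mul_Pm, smul_smul, signC_sq, one_smul]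
  rw [Finset.sum_const, Finset.card_univ, Fintype.card_perm, Fintype.card_fin,
    ← Nat.cast_smul_eq_nsmul ℂ, smul_smul, inv_mul_cancel₀, one_smul]
  exact Nat.cast_ne_zero.mpr l.factorial_ne_zero

lemma delta_prod {n l : ℕ} (f g : Fin l → Fin n) :
    (∏ j, if f j = g j then (1:ℂ) else 0) = if f = g then 1 else 0 := by
  by_cases h : f = g
  · subst h; simp
  · rw [if_neg h]
    obtain ⟨j, hj⟩ := Function.ne_iff.mp h
    exact Finset.prod_eq_zero (Finset.mem_univ j) (if_neg hj)

lemma Skron_eq_fam (n l : ℕ) (M : Matrix (Fin n) (Fin n) ℂ) (m : Fin l) (f g : Fin l → Fin n) :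
    Skron n l M m f g = ∏ j, (if j = m then M else 1) (f j) (g j) := by
  simp only [Skron, Matrix.of_apply]
  refine Finset.prod_congr rfl fun j _ => ?_
  by_cases h : j = m
  · simp [h]
  · simp [h, Matrix.one_apply]

lemma Skron_mul_Skron (n l : ℕ) (M M' : Matrix (Fin n) (Fin n) ℂ) (m m' : Fin l) :
    Skron n l M m * Skron n l M' m'
      = Matrix.of fun f g => ∏ j,
          ((if j = m then M else 1) * (if j = m' then M' else 1)) (f j) (g j) := by
  ext f g
  rw [Matrix.mul_apply]
  simp only [Skron_eq_fam, Matrix.of_apply, ← Finset.prod_mul_distrib]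
  rw [← Fintype.prod_sum fun j x => (if j = m then M else 1) (f j) x
    * (if j = m' then M' else 1) x (g j)]
  exact Finset.prod_congr rfl fun j _ => (Matrix.mul_apply).symm

lemma skmul_apply {n l : ℕ} {m m' : Fin l} (hmm : m ≠ m') (w v : Fin n → ℂ)
    (f g : Fin l → Fin n) :
    (Skron n l (vecMulVec w v) m * Skron n l (vecMulVec w v) m') f g
      = (w (f m) * v (g m)) * (w (f m') * v (g m'))
        * ∏ j ∈ (Finset.univ.erase m).erase m', (if f j = g j then (1:ℂ) else 0) := by
  rw [Skron_mul_Skron]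
  simp only [Matrix.of_apply]
  rw [← Finset.mul_prod_erase Finset.univ _ (Finset.mem_univ m),
    ← Finset.mul_prod_erase (Finset.univ.erase m) _
      (Finset.mem_erase.mpr ⟨Ne.symm hmm, Finset.mem_univ m'⟩)]
  have h1 : ((if m = m then vecMulVec w v else 1) * (if m = m' then vecMulVec w v else 1))
      (f m) (g m) = w (f m) * v (g m) := by
    rw [if_pos rfl, if_neg hmm, mul_one, vecMulVec_apply]
  have h2 : ((if m' = m then vecMulVec w v else 1) * (if m' = m' then vecMulVec w v else 1))
      (f m') (g m') = w (f m') * v (g m') := by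
    rw [if_pos rfl, if_neg (Ne.symm hmm), one_mul, vecMulVec_apply]
  rw [h1, h2, ← mul_assoc]
  congr 1
  refine Finset.prod_congr rfl fun j hj => ?_
  have hjm' : j ≠ m' := (Finset.mem_erase.mp hj).1
  have hjm : j ≠ m := (Finset.mem_erase.mp (Finset.mem_erase.mp hj).2).1
  rw [if_neg hjm, if_neg hjm', mul_one, Matrix.one_apply]

lemma Pm_swap_mul {n l : ℕ} {m m' : Fin l} (hmm : m ≠ m') (w v : Fin n → ℂ) :
    Pm n l (Equiv.swap m m') * (Skron n l (vecMulVec w v) m * Skron n l (vecMulVec w v) m')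
      = Skron n l (vecMulVec w v) m * Skron n l (vecMulVec w v) m' := by
  ext f g
  rw [Pm_mul_apply, Equiv.swap_inv, skmul_apply hmm, skmul_apply hmm]
  have e1 : (f ∘ ⇑(Equiv.swap m m')) m = f m' := by simp [Equiv.swap_apply_left]
  have e2 : (f ∘ ⇑(Equiv.swap m m')) m' = f m := by simp [Equiv.swap_apply_right]
  rw [e1, e2]
  have e3 : ∀ j ∈ (Finset.univ.erase m).erase m',
      (if (f ∘ ⇑(Equiv.swap m m')) j = g j then (1:ℂ) else 0)
        = (if f j = g j then (1:ℂ) else 0) := by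
    intro j hj
    have hjm' : j ≠ m' := (Finset.mem_erase.mp hj).1
    have hjm : j ≠ m := (Finset.mem_erase.mp (Finset.mem_erase.mp hj).2).1
    simp [Equiv.swap_apply_of_ne_of_ne hjm hjm']
  rw [Finset.prod_congr rfl e3]
  ring

lemma Al_mul_NN {n l : ℕ} {m m' : Fin l} (hmm : m ≠ m') (w v : Fin n → ℂ) :
    Al n l * (Skron n l (vecMulVec w v) m * Skron n l (vecMulVec w v) m') = 0 := by
  have h : Al n l * (Skron n l (vecMulVec w v) m * Skron n l (vecMulVec w v) m')
      = -(Al n l * (Skron n l (vecMulVec w v) m * Skron n l (vecMulVec w v) m')) := by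
    conv_lhs => rw [← Pm_swap_mul hmm w v, ← mul_assoc, Al_mul_Pm,
      Equiv.Perm.sign_swap hmm]
    simp [Matrix.smul_mul]
  have h2 : (2:ℂ) • (Al n l * (Skron n l (vecMulVec w v) m * Skron n l (vecMulVec w v) m'))
      = 0 := by
    rw [two_smul]
    nth_rewrite 1 [h]
    simp
  simpa using (smul_eq_zero.mp h2).resolve_left (by norm_num)

lemma Skron_apply_erase (n l : ℕ) (M : Matrix (Fin n) (Fin n) ℂ) (m : Fin l)
    (f g : Fin l → Fin n) :
    Skron n l M m f g
      = M (f m) (g m) * ∏ j ∈ Finset.univ.erase m, (if f j = g j then (1:ℂ) else 0) := by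
  rw [Skron_eq_fam, ← Finset.mul_prod_erase Finset.univ _ (Finset.mem_univ m), if_pos rfl]
  congr 1
  refine Finset.prod_congr rfl fun j hj => ?_
  rw [if_neg (Finset.mem_erase.mp hj).1, Matrix.one_apply]

lemma Skron_smul_one_add (n l : ℕ) (q : ℂ) (N : Matrix (Fin n) (Fin n) ℂ) (m : Fin l) :
    Skron n l (q • 1 + N) m = q • 1 + Skron n l N m := by
  ext f g
  rw [Matrix.add_apply, Skron_apply_erase, Skron_apply_erase, Matrix.add_apply, add_mul]
  congr 1
  rw [Matrix.smul_apply, Matrix.smul_apply, smul_eq_mul, smul_eq_mul, mul_assoc,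
    Matrix.one_apply, Matrix.one_apply]
  congr 1
  rw [← delta_prod f g, ← Finset.mul_prod_erase Finset.univ _ (Finset.mem_univ m)]

section Main
variable {n l : ℕ} (q : ℂ) (w v : Fin n → ℂ)

lemma aux1 (m : Fin l) : ∀ T : List (Fin l), m ∉ T →
    (Al n l * Skron n l (vecMulVec w v) m)
        * (T.map fun i => q • 1 + Skron n l (vecMulVec w v) i).prod
      = q ^ T.length • (Al n l * Skron n l (vecMulVec w v) m) := by
  intro T
  induction T with
  | nil => simp
  | cons i T ih =>
    intro hm
    have hmi : m ≠ i := fun h => hm (h ▸ (List.mem_cons_self : i ∈ i :: T))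
    have hmT : m ∉ T := fun h => hm (List.mem_cons_of_mem i h)
    rw [List.map_cons, List.prod_cons, ← mul_assoc]
    have step : (Al n l * Skron n l (vecMulVec w v) m)
        * (q • 1 + Skron n l (vecMulVec w v) i)
        = q • (Al n l * Skron n l (vecMulVec w v) m) := by
      rw [mul_add, Matrix.mul_smul, mul_one, mul_assoc, Al_mul_NN hmi w v, add_zero]
    rw [step, Matrix.smul_mul, ih hmT, List.length_cons, smul_smul, ← pow_succ']

lemma key_lemma : ∀ L : List (Fin l), L.Nodup →
    q • (Al n l * (L.map fun i => q • 1 + Skron n l (vecMulVec w v) i).prod)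
      = q ^ (L.length + 1) • Al n l
        + q ^ L.length • (L.map fun i => Al n l * Skron n l (vecMulVec w v) i).sum := by
  intro L
  induction L with
  | nil => simp [pow_one]
  | cons m T ih =>
    intro hnd
    have hmT : m ∉ T := (List.nodup_cons.mp hnd).1
    have hTnd : T.Nodup := (List.nodup_cons.mp hnd).2
    rw [List.map_cons, List.prod_cons, ← mul_assoc]
    have step : Al n l * (q • 1 + Skron n l (vecMulVec w v) m)
        = q • Al n l + Al n l * Skron n l (vecMulVec w v) m := by
      rw [mul_add, Matrix.mul_smul, mul_one]
    rw [step, add_mul, Matrix.smul_mul, aux1 q w v m T hmT, smul_add, ih hTnd,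
      List.map_cons, List.sum_cons, List.length_cons]
    rw [smul_add, smul_smul, smul_smul, smul_smul, ← pow_succ', ← pow_succ', smul_add]
    module

end Main

/-- With `σ⁽ᵐ⁾ = 1^{⊗(m-1)} ⊗ ρ_{(k+l-1,1)}(σ_p) ⊗ 1^{⊗(l-m)}` on `V^{⊗l}` and `A_l` the
antisymmetrizer, `q^{1-l} A_l σ⁽¹⁾σ⁽²⁾⋯σ⁽ˡ⁾ A_l = A_l (Σ_m σ⁽ᵐ⁾ - (l-1) q·1) A_l`
for every `1 ≤ p ≤ k+l`. -/
theorem antisym_product_identity (k l : ℕ) (hl : 1 ≤ l) (q : ℂ) (hq : q ≠ 0)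
    (hgen : ∀ m : ℕ, 1 ≤ m → m ≤ k + l → qnum q m ≠ 0)
    (p : ℕ) (hp1 : 1 ≤ p) (hp2 : p ≤ k + l) :
    q ^ (1 - (l : ℤ)) •
        (Al (k+l-1+1) l * (List.ofFn fun m : Fin l => Skron (k+l-1+1) l (rho (k+l-1) q p) m).prod
          * Al (k+l-1+1) l)
      = Al (k+l-1+1) l *
          ((∑ m : Fin l, Skron (k+l-1+1) l (rho (k+l-1) q p) m) - (((l : ℂ) - 1) * q) • 1)
          * Al (k+l-1+1) l := by
  have hrho : ∀ m : Fin l, Skron (k+l-1+1) l (rho (k+l-1) q p) m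
      = q • 1 + Skron (k+l-1+1) l (vecMulVec (wvec (k+l-1) q p) (vvec (k+l-1) p)) m := by
    intro m
    rw [rho_eq, Skron_smul_one_add]
  have hofn : (List.ofFn fun m : Fin l => Skron (k+l-1+1) l (rho (k+l-1) q p) m)
      = (List.finRange l).map fun i =>
        q • 1 + Skron (k+l-1+1) l (vecMulVec (wvec (k+l-1) q p) (vvec (k+l-1) p)) i := by
    rw [List.ofFn_eq_map]
    exact List.map_congr_left fun m _ => hrho m
  have hkey := key_lemma q (wvec (k+l-1) q p) (vvec (k+l-1) p)
    (List.finRange l) (List.nodup_finRange l)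
  rw [List.length_finRange] at hkey
  have hsum : ((List.finRange l).map fun i => Al (k+l-1+1) l
        * Skron (k+l-1+1) l (vecMulVec (wvec (k+l-1) q p) (vvec (k+l-1) p)) i).sum
      = ∑ m : Fin l, Al (k+l-1+1) l
        * Skron (k+l-1+1) l (vecMulVec (wvec (k+l-1) q p) (vvec (k+l-1) p)) m := by
    rw [← List.ofFn_eq_map, List.sum_ofFn]
  rw [hsum] at hkey
  have hprod : Al (k+l-1+1) l
        * ((List.ofFn fun m : Fin l => Skron (k+l-1+1) l (rho (k+l-1) q p) m)).prod
      = q⁻¹ • (q ^ (l + 1) • Al (k+l-1+1) l + q ^ l • ∑ m : Fin l, Al (k+l-1+1) l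
          * Skron (k+l-1+1) l (vecMulVec (wvec (k+l-1) q p) (vvec (k+l-1) p)) m) := by
    rw [hofn, ← hkey, smul_smul, inv_mul_cancel₀ hq, one_smul]
  have hR : Al (k+l-1+1) l * ((∑ m : Fin l, Skron (k+l-1+1) l (rho (k+l-1) q p) m)
        - (((l:ℂ) - 1) * q) • 1)
      = q • Al (k+l-1+1) l + ∑ m : Fin l, Al (k+l-1+1) l
          * Skron (k+l-1+1) l (vecMulVec (wvec (k+l-1) q p) (vvec (k+l-1) p)) m := by
    rw [mul_sub, Matrix.mul_smul, mul_one, Matrix.mul_sum]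
    rw [Finset.sum_congr rfl fun m _ => by
      rw [hrho m, mul_add, Matrix.mul_smul, mul_one]]
    rw [Finset.sum_add_distrib, Finset.sum_const, Finset.card_univ, Fintype.card_fin,
      ← Nat.cast_smul_eq_nsmul ℂ, smul_smul]
    module
  have hc1 : (q ^ (1 - (l:ℤ)) * q⁻¹) * q ^ (l + 1) = q := by
    rw [← zpow_natCast q (l+1), show q⁻¹ = q ^ (-1 : ℤ) from (zpow_neg_one q).symm,
      ← zpow_add₀ hq, ← zpow_add₀ hq]
    have h : ((1 - (l:ℤ)) + -1) + ((l : ℕ) + 1 : ℕ) = 1 := by push_cast; ring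
    rw [h, zpow_one]
  have hc2 : (q ^ (1 - (l:ℤ)) * q⁻¹) * q ^ l = 1 := by
    rw [← zpow_natCast q l, show q⁻¹ = q ^ (-1 : ℤ) from (zpow_neg_one q).symm,
      ← zpow_add₀ hq, ← zpow_add₀ hq]
    have h : ((1 - (l:ℤ)) + -1) + ((l : ℕ) : ℤ) = 0 := by push_cast; ring
    rw [h, zpow_zero]
  rw [hprod, hR, Matrix.smul_mul, smul_smul, Matrix.add_mul, Matrix.smul_mul,
    Matrix.smul_mul, Al_mul_Al, Finset.sum_mul, smul_add, smul_smul, smul_smul,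
    hc1, hc2, one_smul, Matrix.add_mul, Matrix.smul_mul, Finset.sum_mul, Al_mul_Al]
end

section
/- Let ρ_1, ρ_2 be representations of the Hecke algebra H_n on V_1, V_2, and let A ∈ End(V_1 ⊗ V_2) be an idempotent (A^2 = A) commuting with ρ_1(σ_p)⊗ρ_2(σ_p) and with ρ_1(σ_p)⊗1 + 1⊗ρ_2(σ_p) for all p. Suppose for some α ≠ 0: ((q - q^{-1} - α) ρ_1(σ_p)⊗ρ_2(σ_p) + ρ_1(σ_p)⊗1 + 1⊗ρ_2(σ_p) + ((1-α^2)/(q-q^{-1})) 1⊗1) A = 0 for all p. Then ρ(σ_p) := α^{-1} A (ρ_1(σ_p)⊗ρ_2(σ_p)) defines a representation of H_n on the image A(V_1 ⊗ V_2), i.e. the ρ(σ_p) preserve Im A and satisfy the braid, locality and Hecke relations there. -/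
open TensorProduct

/-- Let `ρ₁, ρ₂` be representations of the Hecke algebra `H_n` (generators `σ_1,…,σ_{n-1}`)
on `V₁, V₂` and let `A` be an idempotent on `V₁ ⊗ V₂` commuting with `ρ₁(σ_p) ⊗ ρ₂(σ_p)`
and with `ρ₁(σ_p) ⊗ 1 + 1 ⊗ ρ₂(σ_p)` and satisfying
`((q - q⁻¹ - α) ρ₁(σ_p) ⊗ ρ₂(σ_p) + ρ₁(σ_p) ⊗ 1 + 1 ⊗ ρ₂(σ_p) + ((1-α²)/(q-q⁻¹)) 1 ⊗ 1) A = 0`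
for some `α ≠ 0`.  Then `ρ(σ_p) := α⁻¹ A (ρ₁(σ_p) ⊗ ρ₂(σ_p))` defines a representation of
`H_n` on `Im A`: it maps into `Im A` and satisfies the braid, locality and Hecke relations
there. -/
theorem hecke_idempotent_representation {V₁ V₂ : Type*}
    [AddCommGroup V₁] [Module ℂ V₁] [AddCommGroup V₂] [Module ℂ V₂]
    (n : ℕ) (q α : ℂ) (hq : q - q⁻¹ ≠ 0) (hα : α ≠ 0)
    (ρ₁ : ℕ → Module.End ℂ V₁) (ρ₂ : ℕ → Module.End ℂ V₂)
    (braid₁ : ∀ p, 1 ≤ p → p + 2 ≤ n →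
      ρ₁ p * ρ₁ (p+1) * ρ₁ p = ρ₁ (p+1) * ρ₁ p * ρ₁ (p+1))
    (braid₂ : ∀ p, 1 ≤ p → p + 2 ≤ n →
      ρ₂ p * ρ₂ (p+1) * ρ₂ p = ρ₂ (p+1) * ρ₂ p * ρ₂ (p+1))
    (loc₁ : ∀ p r, 1 ≤ p → r ≤ n - 1 → p + 1 < r → ρ₁ p * ρ₁ r = ρ₁ r * ρ₁ p)
    (loc₂ : ∀ p r, 1 ≤ p → r ≤ n - 1 → p + 1 < r → ρ₂ p * ρ₂ r = ρ₂ r * ρ₂ p)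
    (hecke₁ : ∀ p, 1 ≤ p → p ≤ n - 1 → ρ₁ p * ρ₁ p = (q - q⁻¹) • ρ₁ p + 1)
    (hecke₂ : ∀ p, 1 ≤ p → p ≤ n - 1 → ρ₂ p * ρ₂ p = (q - q⁻¹) • ρ₂ p + 1)
    (A : Module.End ℂ (V₁ ⊗[ℂ] V₂)) (hA : A * A = A)
    (hcomm₁ : ∀ p, 1 ≤ p → p ≤ n - 1 →
      Commute A (TensorProduct.map (ρ₁ p) (ρ₂ p)))
    (hcomm₂ : ∀ p, 1 ≤ p → p ≤ n - 1 →
      Commute A (TensorProduct.map (ρ₁ p) LinearMap.id + TensorProduct.map LinearMap.id (ρ₂ p)))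
    (hrel : ∀ p, 1 ≤ p → p ≤ n - 1 →
      ((q - q⁻¹ - α) • TensorProduct.map (ρ₁ p) (ρ₂ p)
          + TensorProduct.map (ρ₁ p) LinearMap.id + TensorProduct.map LinearMap.id (ρ₂ p)
          + ((1 - α^2) / (q - q⁻¹)) • (1 : Module.End ℂ (V₁ ⊗[ℂ] V₂))) * A = 0)
    (T : ℕ → Module.End ℂ (V₁ ⊗[ℂ] V₂))
    (hT : ∀ p, T p = α⁻¹ • (A * TensorProduct.map (ρ₁ p) (ρ₂ p))) :
    (∀ p x, T p x ∈ LinearMap.range A) ∧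
    (∀ p, 1 ≤ p → p + 2 ≤ n → ∀ x ∈ LinearMap.range A,
      (T p * T (p+1) * T p) x = (T (p+1) * T p * T (p+1)) x) ∧
    (∀ p r, 1 ≤ p → r ≤ n - 1 → p + 1 < r → ∀ x ∈ LinearMap.range A,
      (T p * T r) x = (T r * T p) x) ∧
    (∀ p, 1 ≤ p → p ≤ n - 1 → ∀ x ∈ LinearMap.range A,
      (T p * T p) x = (q - q⁻¹) • (T p x) + x) := by
  set δ := q - q⁻¹ with hδ
  -- abbreviation
  set S : ℕ → Module.End ℂ (V₁ ⊗[ℂ] V₂) := fun p => TensorProduct.map (ρ₁ p) (ρ₂ p) with hS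
  have mapmul : ∀ (f g : Module.End ℂ V₁) (f' g' : Module.End ℂ V₂),
      TensorProduct.map (f*g) (f'*g') = TensorProduct.map f f' * TensorProduct.map g g' := by
    intro f g f' g'
    rw [Module.End.mul_eq_comp, Module.End.mul_eq_comp, Module.End.mul_eq_comp,
      TensorProduct.map_comp]
  have collapse : ∀ (X Y : Module.End ℂ (V₁ ⊗[ℂ] V₂)), Commute A X →
      A * X * (A * Y) = A * (X * Y) := by
    intro X Y h
    rw [h.eq, mul_assoc, ← mul_assoc A A Y, hA, ← mul_assoc, ← h.eq, mul_assoc]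
  have hTT : ∀ p r, Commute A (S p) →
      T p * T r = (α⁻¹ * α⁻¹) • (A * (S p * S r)) := by
    intro p r h
    rw [hT p, hT r, smul_mul_assoc, mul_smul_comm, smul_smul, collapse _ _ h]
  -- range
  refine ⟨?_, ?_, ?_, ?_⟩
  · intro p x
    rw [hT p]
    exact ⟨α⁻¹ • (TensorProduct.map (ρ₁ p) (ρ₂ p)) x, by simp [Module.End.mul_apply]⟩
  · -- braid
    intro p h1 h2 x _
    have hp : 1 ≤ p ∧ p ≤ n - 1 := ⟨h1, by omega⟩
    have hp1 : 1 ≤ p + 1 ∧ p + 1 ≤ n - 1 := ⟨by omega, by omega⟩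
    have c1 := hcomm₁ p hp.1 hp.2
    have c2 := hcomm₁ (p+1) hp1.1 hp1.2
    have key : T p * T (p+1) * T p = T (p+1) * T p * T (p+1) := by
      rw [hTT p (p+1) c1, hTT (p+1) p c2, hT p, hT (p+1),
        smul_mul_assoc, smul_mul_assoc, mul_smul_comm, mul_smul_comm, smul_smul, smul_smul,
        collapse _ _ (c1.mul_right c2), collapse _ _ (c2.mul_right c1)]
      have : S p * S (p+1) * S p = S (p+1) * S p * S (p+1) := by
        simp only [hS, ← mapmul]
        rw [braid₁ p h1 h2, braid₂ p h1 h2]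
      rw [this]
    rw [key]
  · -- locality
    intro p r h1 h2 h3 x _
    have hpn : p ≤ n - 1 := by omega
    have hr1 : 1 ≤ r := by omega
    have key : T p * T r = T r * T p := by
      rw [hTT p r (hcomm₁ p h1 hpn), hTT r p (hcomm₁ r hr1 h2)]
      have : S p * S r = S r * S p := by
        simp only [hS, ← mapmul]
        rw [loc₁ p r h1 h2 h3, loc₂ p r h1 h2 h3]
      rw [this]
    rw [key]
  · -- Hecke
    intro p h1 h2 x hx
    obtain ⟨y, rfl⟩ := hx
    have c1 := hcomm₁ p h1 h2
    have hS2 : S p * S p = (δ*δ) • S p + δ • TensorProduct.map (ρ₁ p) LinearMap.id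
        + δ • TensorProduct.map LinearMap.id (ρ₂ p) + 1 := by
      simp only [hS, ← mapmul]
      rw [hecke₁ p h1 h2, hecke₂ p h1 h2]
      simp [TensorProduct.map_add_left, TensorProduct.map_add_right,
        TensorProduct.map_smul_left, TensorProduct.map_smul_right, Module.End.one_eq_id,
        smul_smul]
      abel
    have hXA : (TensorProduct.map (ρ₁ p) LinearMap.id
          + TensorProduct.map LinearMap.id (ρ₂ p)) * A
        = (α - δ) • (S p * A) + (-((1 - α^2)/δ)) • A := by
      have h0 := hrel p h1 h2
      have h0' : (δ - α) • (S p * A) + (TensorProduct.map (ρ₁ p) LinearMap.id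
          + TensorProduct.map LinearMap.id (ρ₂ p)) * A + ((1 - α^2)/δ) • A = 0 := by
        rw [← h0]
        simp only [add_mul, smul_mul_assoc, one_mul]
        abel
      have h' : (TensorProduct.map (ρ₁ p) LinearMap.id
          + TensorProduct.map LinearMap.id (ρ₂ p)) * A
          = 0 - ((δ - α) • (S p * A) + ((1 - α^2)/δ) • A) := by
        rw [← h0']; abel
      rw [h']
      module
    have hASA : A * S p * A = A * S p := by
      rw [c1.eq, mul_assoc, hA, ← c1.eq]
    have hASA' : A * (S p * A) = A * S p := by rw [← mul_assoc, hASA]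
    have expand : (S p * S p) * A = (δ*α) • (S p * A) + (α^2) • A := by
      rw [hS2]
      rw [show ((δ*δ) • S p + δ • TensorProduct.map (ρ₁ p) LinearMap.id
          + δ • TensorProduct.map LinearMap.id (ρ₂ p) + 1) * A
          = (δ*δ) • (S p * A) + δ • ((TensorProduct.map (ρ₁ p) LinearMap.id
            + TensorProduct.map LinearMap.id (ρ₂ p)) * A) + A by
          simp only [add_mul, smul_mul_assoc, one_mul, smul_add]; abel]
      rw [hXA]
      match_scalars
      · ring
      · field_simp; ring
    have key : T p * T p * A = δ • (T p * A) + A := by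
      rw [hTT p p c1, smul_mul_assoc, mul_assoc, expand, hT p]
      rw [mul_add, mul_smul_comm, mul_smul_comm, hASA', hA, smul_mul_assoc, hASA]
      match_scalars
      · field_simp
      · field_simp
    calc (T p * T p) (A y) = (T p * T p * A) y := rfl
    _ = (δ • (T p * A) + A) y := by rw [key]
    _ = δ • (T p) (A y) + A y := by simp [Module.End.mul_apply]
end
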